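/- arXiv:1609.08742 — 6 statements merged into one kernel-verified Lean document; each statement's English description precedes it below -/
import Mathlib

section
/- Let f: ℝ → ℂ be square-integrable and let f̃ denote its Fourier–Plancherel transform. Assume that f̃ is integrable and that f is continuous at the point y ∈ ℝ. Then f(y) = ∫_ℝ f̃(ξ) e^{2πiξy} dξ. -/
open MeasureTheory Real Complex
open scoped FourierTransform SchwartzMap ContDiff RealInnerProductSpace ENNReal NNReal

noncomputable def toSchwartz (g : ℝ → ℂ) (hg : ContDiff ℝ ∞ g)
    (hsupp : HasCompactSupport g) : 𝓢(ℝ, ℂ) where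
  toFun := g
  smooth' := hg
  decay' := by
    intro k n
    have h1 : Continuous fun x : ℝ => ‖iteratedFDeriv ℝ n g x‖ :=
      (hg.continuous_iteratedFDeriv (mod_cast le_top)).norm
    have h2 : Continuous fun x : ℝ => ‖x‖ ^ k * ‖iteratedFDeriv ℝ n g x‖ :=
      (continuous_norm.pow k).mul h1
    have h3 : HasCompactSupport fun x : ℝ => ‖x‖ ^ k * ‖iteratedFDeriv ℝ n g x‖ :=
      (hsupp.iteratedFDeriv n).norm.mul_left
    obtain ⟨C, hC⟩ := h2.bounded_above_of_compact_support h3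
    refine ⟨C, fun x => ?_⟩
    have := hC x
    rwa [Real.norm_eq_abs, _root_.abs_of_nonneg (by positivity)] at this

lemma innerflip : (innerₗ ℝ).flip = innerₗ ℝ := by
  apply LinearMap.ext; intro x; apply LinearMap.ext; intro y
  exact real_inner_comm x y

lemma innerflip2 : (-innerₗ ℝ).flip = -innerₗ ℝ := by
  apply LinearMap.ext; intro x; apply LinearMap.ext; intro y
  simpa using real_inner_comm x y

lemma hLcont : Continuous fun p : ℝ × ℝ => (innerₗ ℝ) p.1 p.2 :=
  continuous_fst.inner continuous_snd

lemma hLcont2 : Continuous fun p : ℝ × ℝ => (-innerₗ ℝ) p.1 p.2 := by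
  exact (continuous_fst.inner continuous_snd :
    Continuous fun p : ℝ × ℝ => ⟪p.1, p.2⟫).neg

lemma mulform (u v : ℝ → ℂ) (hu : Integrable u) (hv : Integrable v) :
    ∫ ξ, 𝓕 u ξ * v ξ = ∫ x, u x * 𝓕 v x := by
  have := VectorFourier.integral_fourierIntegral_smul_eq_flip (L := innerₗ ℝ)
    Real.continuous_fourierChar hLcont hu hv
  rw [innerflip] at this
  simp only [smul_eq_mul] at this; exact this

lemma mulform2 (u v : ℝ → ℂ) (hu : Integrable u) (hv : Integrable v) :
    ∫ ξ, 𝓕⁻ u ξ * v ξ = ∫ x, u x * 𝓕⁻ v x := by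
  have := VectorFourier.integral_fourierIntegral_smul_eq_flip (L := -innerₗ ℝ)
    Real.continuous_fourierChar hLcont2 hu hv
  rw [innerflip2] at this
  simp only [smul_eq_mul] at this; exact this

lemma fourier_as_integral (g : ℝ → ℂ) (ξ : ℝ) :
    (∫ x : ℝ, g x * Complex.exp (-(2 * π * I * x * ξ))) = 𝓕 g ξ := by
  rw [Real.fourier_eq']
  congr 1 with x
  rw [smul_eq_mul, mul_comm]
  congr 1
  simp only [RCLike.inner_apply, conj_trivial]
  push_cast
  ring_nf

/-- Hölder-type bound in `ℝ≥0∞`. -/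
lemma holder_bound (u v : ℝ → ℂ) (hu : AEStronglyMeasurable u volume)
    (hv : AEStronglyMeasurable v volume) :
    (‖∫ x, u x * v x‖₊ : ℝ≥0∞) ≤ eLpNorm u 2 volume * eLpNorm v 2 volume := by
  calc (‖∫ x, u x * v x‖₊ : ℝ≥0∞) ≤ ∫⁻ x, ‖u x * v x‖₊ ∂volume :=
        enorm_integral_le_lintegral_enorm _
  _ = eLpNorm (u • v) 1 volume := by
        rw [eLpNorm_one_eq_lintegral_enorm]; rfl
  _ ≤ eLpNorm u 2 volume * eLpNorm v 2 volume := by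
        apply eLpNorm_smul_le_mul_eLpNorm hv hu

/-- Pointwise Fourier inversion at a point of continuity: if `f ∈ L²(ℝ)`, `ftilde` is the
Fourier–Plancherel transform of `f` (characterized by the fact that it is at `L²`-distance
`‖f - g‖₂` from the Fourier integral of any `g ∈ L¹ ∩ L²`), `ftilde` is integrable and `f`
is continuous at `y`, then `f(y) = ∫ ftilde(ξ) e^{2πiξy} dξ`. -/
theorem plancherel_pointwise_inversion
    (f ftilde : ℝ → ℂ)
    (hf : MemLp f 2 (volume : Measure ℝ))
    (hchar : ∀ g : ℝ → ℂ, Integrable g → MemLp g 2 (volume : Measure ℝ) →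
      eLpNorm (fun ξ : ℝ =>
          ftilde ξ - ∫ x : ℝ, g x * Complex.exp (-(2 * π * I * x * ξ)))
        2 (volume : Measure ℝ)
      = eLpNorm (fun x : ℝ => f x - g x) 2 (volume : Measure ℝ))
    (hft : Integrable ftilde)
    (y : ℝ) (hcont : ContinuousAt f y) :
    f y = ∫ ξ : ℝ, ftilde ξ * Complex.exp (2 * π * I * ξ * y) := by
  -- the candidate inverse transform
  set F : ℝ → ℂ := 𝓕⁻ ftilde with hF
  have hFcont : Continuous F := by
    apply VectorFourier.fourierIntegral_continuous Real.continuous_fourierChar hLcont2 hft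
  have hRHS : (∫ ξ : ℝ, ftilde ξ * Complex.exp (2 * π * I * ξ * y)) = F y := by
    rw [hF, Real.fourierInv_eq']
    congr 1 with ξ
    rw [smul_eq_mul, mul_comm]
    congr 1
    simp only [RCLike.inner_apply, conj_trivial]
    push_cast
    ring_nf
  rw [hRHS]
  -- a.e. equality of f and F
  have key : ∀ᵐ x : ℝ ∂(volume : Measure ℝ), f x = F x := by
    apply ae_eq_of_integral_contDiff_smul_eq (hf.locallyIntegrable one_le_two)
      (hFcont.locallyIntegrable)
    intro g hg hgsupp
    set w : ℝ → ℂ := fun x => (g x : ℂ) with hwdef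
    have hwsmooth : ContDiff ℝ ∞ w := Complex.ofRealCLM.contDiff.comp hg
    have hwsupp : HasCompactSupport w :=
      hgsupp.comp_left (g := Complex.ofReal) Complex.ofReal_zero
    set W : 𝓢(ℝ, ℂ) := toSchwartz w hwsmooth hwsupp with hWdef
    set Ψ : 𝓢(ℝ, ℂ) := (FourierTransform.fourierCLE ℂ 𝓢(ℝ, ℂ)).symm W with hΨdef
    have hΨinv : ⇑Ψ = 𝓕⁻ w := by
      rw [hΨdef, FourierTransform.fourierCLE_symm_apply, SchwartzMap.fourierInv_coe]; rfl
    have hΨfour : 𝓕 ⇑Ψ = w := by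
      have h1 : (FourierTransform.fourierCLE ℂ 𝓢(ℝ, ℂ)) Ψ = W :=
        (FourierTransform.fourierCLE ℂ 𝓢(ℝ, ℂ)).apply_symm_apply W
      rw [← SchwartzMap.fourier_coe, ← FourierTransform.fourierCLE_apply (R := ℂ) Ψ, h1]
      rfl
    have hwint : Integrable w := W.integrable
    have hwmem2 : MemLp w 2 (volume : Measure ℝ) :=
      (Complex.continuous_ofReal.comp hg.continuous).memLp_of_hasCompactSupport hwsupp
    have hΨint : Integrable ⇑Ψ := Ψ.integrable
    have hΨmem2 : MemLp ⇑Ψ 2 (volume : Measure ℝ) := by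
      rw [memLp_two_iff_integrable_sq_norm Ψ.continuous.aestronglyMeasurable]
      obtain ⟨C, hCpos, hC⟩ := Ψ.decay 0 0
      apply Integrable.mono' (Ψ.integrable.norm.const_mul C)
      · exact (Ψ.continuous.norm.pow 2).aestronglyMeasurable
      · filter_upwards with x
        have hx := hC x
        simp only [pow_zero, one_mul, norm_iteratedFDeriv_zero] at hx
        have : ‖Ψ x‖ ^ 2 ≤ C * ‖Ψ x‖ := by
          nlinarith [norm_nonneg (Ψ x)]
        simpa [_root_.abs_of_nonneg (sq_nonneg ‖Ψ x‖), _root_.sq_abs] using this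
    -- computation 1 : ∫ g • F = ∫ ftilde * Ψ
    have comp1 : ∫ x : ℝ, g x • F x = ∫ ξ : ℝ, ftilde ξ * Ψ ξ := by
      have h1 : ∫ x : ℝ, g x • F x = ∫ x : ℝ, F x * w x := by
        congr 1 with x
        rw [Complex.real_smul, mul_comm]
      rw [h1, hF, mulform2 ftilde w hft hwint]
      congr 1 with x
      rw [← hΨinv]
    -- computation 2 : ∫ g • f = ∫ ftilde * Ψ
    have comp2 : ∫ x : ℝ, g x • f x = ∫ ξ : ℝ, ftilde ξ * Ψ ξ := by
      have hsm : ∫ x : ℝ, g x • f x = ∫ x : ℝ, f x * w x := by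
        congr 1 with x
        rw [Complex.real_smul, mul_comm]
      rw [hsm]
      set A := ∫ x : ℝ, f x * w x with hA
      set B := ∫ ξ : ℝ, ftilde ξ * Ψ ξ with hB
      set C : ℝ≥0∞ := eLpNorm w 2 volume + eLpNorm (⇑Ψ) 2 volume with hC
      have hCtop : C ≠ ⊤ :=
        (ENNReal.add_lt_top.2 ⟨hwmem2.eLpNorm_lt_top, hΨmem2.eLpNorm_lt_top⟩).ne
      have int_ftΨ : Integrable (fun ξ : ℝ => ftilde ξ * Ψ ξ) := by
        obtain ⟨c, hcpos, hc⟩ := Ψ.decay 0 0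
        have : Integrable (⇑Ψ * ftilde) := Integrable.bdd_mul hft
          Ψ.continuous.aestronglyMeasurable
          (ae_of_all _ fun x => by simpa using hc x)
        have h' := this
        convert h' using 1; funext x; exact mul_comm _ _
      have bound : ∀ ε : ℝ≥0∞, ε ≠ 0 → (‖A - B‖₊ : ℝ≥0∞) ≤ ε * C := by
        intro ε hε
        obtain ⟨g₀, g₀supp, hg₀ε, g₀cont, g₀mem⟩ :=
          hf.exists_hasCompactSupport_eLpNorm_sub_le (p := 2) (by norm_num) hε
        have hg₀int : Integrable g₀ := g₀cont.integrable_of_hasCompactSupport g₀supp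
        have hg₀ε' : eLpNorm (fun x : ℝ => f x - g₀ x) 2 volume ≤ ε := hg₀ε
        have hch := hchar g₀ hg₀int g₀mem
        simp only [fourier_as_integral g₀] at hch
        have hFg₀cont : Continuous (𝓕 g₀) :=
          VectorFourier.fourierIntegral_continuous Real.continuous_fourierChar hLcont hg₀int
        -- integrability facts
        have int_fw : Integrable (fun x : ℝ => f x * w x) := by
          have h1 : MemLp (f • w) 1 (volume : Measure ℝ) := hwmem2.smul hf
          have := memLp_one_iff_integrable.1 h1
          exact this
        have int_g₀w : Integrable (fun x : ℝ => g₀ x * w x) := by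
          apply Continuous.integrable_of_hasCompactSupport
            (g₀cont.mul (Complex.continuous_ofReal.comp hg.continuous))
          exact g₀supp.mul_right
        have int_Fg₀Ψ : Integrable (fun ξ : ℝ => 𝓕 g₀ ξ * Ψ ξ) := by
          apply Integrable.bdd_mul hΨint hFg₀cont.aestronglyMeasurable
          exact ae_of_all _ fun ξ =>
            VectorFourier.norm_fourierIntegral_le_integral_norm _ _ _ g₀ ξ
        -- the middle identity via the multiplication formula
        have hmid : ∫ x : ℝ, g₀ x * w x = ∫ ξ : ℝ, 𝓕 g₀ ξ * Ψ ξ := by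
          rw [mulform g₀ (⇑Ψ) hg₀int hΨint, funext fun x => congrFun hΨfour x]
        have split : A - B =
            (∫ x : ℝ, (f x - g₀ x) * w x) + ∫ ξ : ℝ, (𝓕 g₀ ξ - ftilde ξ) * Ψ ξ := by
          have e1 : ∫ x : ℝ, (f x - g₀ x) * w x = A - ∫ x : ℝ, g₀ x * w x := by
            rw [hA, ← integral_sub int_fw int_g₀w]
            congr 1 with x
            ring
          have e2 : ∫ ξ : ℝ, (𝓕 g₀ ξ - ftilde ξ) * Ψ ξ =
              (∫ ξ : ℝ, 𝓕 g₀ ξ * Ψ ξ) - B := by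
            rw [hB, ← integral_sub int_Fg₀Ψ int_ftΨ]
            congr 1 with ξ
            ring
          rw [e1, e2, ← hmid]
          ring
        rw [split]
        calc ((‖(∫ x : ℝ, (f x - g₀ x) * w x) + ∫ ξ : ℝ, (𝓕 g₀ ξ - ftilde ξ) * Ψ ξ‖₊ : ℝ≥0) : ℝ≥0∞)
            ≤ (‖∫ x : ℝ, (f x - g₀ x) * w x‖₊ : ℝ≥0∞)
              + (‖∫ ξ : ℝ, (𝓕 g₀ ξ - ftilde ξ) * Ψ ξ‖₊ : ℝ≥0∞) := by
              rw [← ENNReal.coe_add]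
              exact ENNReal.coe_le_coe.2 (nnnorm_add_le _ _)
          _ ≤ eLpNorm (fun x : ℝ => f x - g₀ x) 2 volume * eLpNorm w 2 volume
              + eLpNorm (fun ξ : ℝ => 𝓕 g₀ ξ - ftilde ξ) 2 volume
                * eLpNorm (⇑Ψ) 2 volume := by
              apply add_le_add
              · exact holder_bound _ _ (hf.1.sub g₀cont.aestronglyMeasurable)
                  (Complex.continuous_ofReal.comp hg.continuous).aestronglyMeasurable
              · exact holder_bound _ _ (hFg₀cont.aestronglyMeasurable.sub hft.1)
                  Ψ.continuous.aestronglyMeasurable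
          _ ≤ ε * eLpNorm w 2 volume + ε * eLpNorm (⇑Ψ) 2 volume := by
              apply add_le_add
              · exact mul_le_mul_left hg₀ε' _
              · refine mul_le_mul_left ?_ _
                have hsymm : eLpNorm (fun ξ : ℝ => 𝓕 g₀ ξ - ftilde ξ) 2 volume
                    = eLpNorm (fun ξ : ℝ => ftilde ξ - 𝓕 g₀ ξ) 2 volume :=
                  eLpNorm_sub_comm _ _ _ _
                rw [hsymm, hch]
                exact hg₀ε'
          _ = ε * C := by rw [hC, mul_add]
      have hzero : (‖A - B‖₊ : ℝ≥0∞) = 0 := by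
        by_contra hne
        have hfin : (‖A - B‖₊ : ℝ≥0∞) ≠ ⊤ := ENNReal.coe_ne_top
        have hle : ∀ δ : ℝ≥0∞, δ ≠ 0 → (‖A - B‖₊ : ℝ≥0∞) ≤ δ := by
          intro δ hδ
          have hC1 : C + 1 ≠ 0 := by simp
          have hC2 : C + 1 ≠ ⊤ := by simp [hCtop]
          have hε : δ / (C + 1) ≠ 0 := by
            simp [ENNReal.div_eq_zero_iff, hδ, hC2]
          calc (‖A - B‖₊ : ℝ≥0∞) ≤ δ / (C + 1) * C := bound _ hε
            _ ≤ δ / (C + 1) * (C + 1) := by gcongr; exact le_self_add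
            _ = δ := ENNReal.div_mul_cancel hC1 hC2
        have h2 := hle ((‖A - B‖₊ : ℝ≥0∞) / 2) (by
          simp only [ne_eq, ENNReal.div_eq_zero_iff]
          push_neg
          exact ⟨hne, by norm_num⟩)
        exact absurd h2 (not_le.2 (ENNReal.half_lt_self hne hfin))
      have : A - B = 0 := by
        have := nnnorm_eq_zero.1 (ENNReal.coe_eq_zero.1 hzero)
        exact this
      linear_combination this
    rw [comp1, comp2]
  -- conclude using continuity at y
  have hdense : Dense {x : ℝ | f x = F x} := Measure.dense_of_ae key
  obtain ⟨u, hu, hulim⟩ := mem_closure_iff_seq_limit.1 (hdense y)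
  have l1 : Filter.Tendsto (fun n => f (u n)) Filter.atTop (nhds (f y)) :=
    hcont.tendsto.comp hulim
  have l2 : Filter.Tendsto (fun n => f (u n)) Filter.atTop (nhds (F y)) := by
    have : (fun n => f (u n)) = fun n => F (u n) := funext fun n => hu n
    rw [this]
    exact (hFcont.continuousAt).tendsto.comp hulim
  exact tendsto_nhds_unique l1 l2
end

section
/- Let n₀, n be integers with n ≥ |n₀| and n ≡ n₀ (mod 2), and let 0 ≤ k, k′ ≤ n with k ≠ k′. Then ∫_{SU(2)} ẽ_{n,k}^{n₀}(κ) · conj(ẽ_{n,k′}^{n₀}(κ)) dκ = 0; that is, the functions ẽ_{n,0}^{n₀}, …, ẽ_{n,n}^{n₀} are pairwise orthogonal in L²(SU(2), dκ). -/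
open MeasureTheory Real

/-- The (Borel) measurable space structure on `2 × 2` complex matrices. -/
noncomputable instance : MeasurableSpace (Matrix (Fin 2) (Fin 2) ℂ) :=
  inferInstanceAs (MeasurableSpace (Fin 2 → Fin 2 → ℂ))

/-- The spherical harmonic `ẽ_{n,k}^{n₀}` on `SU(2)`, expressed in the first-row coordinates
`z₁ = κ₀₀`, `z₂ = κ₀₁`.  Summands with `j > (n+n₀)/2` or `k - j > (n-n₀)/2` vanish since the
corresponding binomial coefficient is `0`. -/
noncomputable def etilde (n₀ n : ℤ) (k : ℕ)
    (κ : Matrix.specialUnitaryGroup (Fin 2) ℂ) : ℂ :=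
  (n.toNat.choose k : ℂ)⁻¹ *
    ∑ j ∈ Finset.range (k + 1),
      (-1 : ℂ) ^ (k - j) * (((n + n₀) / 2).toNat.choose j : ℂ) *
        (((n - n₀) / 2).toNat.choose (k - j) : ℂ) *
        ((κ : Matrix (Fin 2) (Fin 2) ℂ) 0 0) ^ (((n + n₀) / 2).toNat - j) *
        ((κ : Matrix (Fin 2) (Fin 2) ℂ) 0 1) ^ j *
        (starRingEnd ℂ ((κ : Matrix (Fin 2) (Fin 2) ℂ) 0 0)) ^ (k - j) *
        (starRingEnd ℂ ((κ : Matrix (Fin 2) (Fin 2) ℂ) 0 1)) ^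
          (((n - n₀) / 2).toNat - (k - j))

namespace SU2Aux

abbrev SU2 := Matrix.specialUnitaryGroup (Fin 2) ℂ

lemma star_mem_SU2 {A : Matrix (Fin 2) (Fin 2) ℂ} (hA : A ∈ Matrix.specialUnitaryGroup (Fin 2) ℂ) :
    star A ∈ Matrix.specialUnitaryGroup (Fin 2) ℂ := by
  rw [Matrix.mem_specialUnitaryGroup_iff] at hA ⊢
  refine ⟨⟨by simpa using hA.1.2, by simpa using hA.1.1⟩, ?_⟩
  have : (star A).det = star A.det := by
    simp [Matrix.star_eq_conjTranspose, Matrix.det_conjTranspose]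
  rw [this, hA.2]
  simp

noncomputable instance : Group SU2 :=
  { (inferInstance : Monoid SU2) with
    inv := fun A => ⟨star A.1, star_mem_SU2 A.2⟩
    inv_mul_cancel := fun A => by
      apply Subtype.ext
      exact A.2.1.1 }

instance : MeasurableMul₂ SU2 := by
  constructor
  apply Measurable.subtype_mk
  apply measurable_pi_lambda
  intro i
  apply measurable_pi_lambda
  intro j
  simp only [Matrix.mul_apply]
  apply Finset.measurable_sum
  intro l _
  exact (Measurable.mul (f := fun x : SU2 × SU2 => (x.1 : Matrix (Fin 2) (Fin 2) ℂ) i l)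
    (g := fun x : SU2 × SU2 => (x.2 : Matrix (Fin 2) (Fin 2) ℂ) l j) (
    ((measurable_pi_apply l).comp ((measurable_pi_apply i).comp
      (measurable_subtype_coe.comp measurable_fst))))
    ((measurable_pi_apply j).comp ((measurable_pi_apply l).comp
      (measurable_subtype_coe.comp measurable_snd))))

instance : MeasurableInv SU2 := by
  constructor
  apply Measurable.subtype_mk
  apply measurable_pi_lambda
  intro i
  apply measurable_pi_lambda
  intro j
  show Measurable fun A : SU2 => starRingEnd ℂ ((A : Matrix (Fin 2) (Fin 2) ℂ) j i)
  exact (Complex.continuous_conj.measurable).comp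
    ((measurable_pi_apply i).comp ((measurable_pi_apply j).comp measurable_subtype_coe))

section RightInv
variable {G : Type*} [Group G] [MeasurableSpace G] [MeasurableMul₂ G] [MeasurableInv G]
  (μ : Measure G) [IsProbabilityMeasure μ] [μ.IsMulLeftInvariant]

lemma aux_inv_eq_self : μ.inv = μ := by
  haveI : IsProbabilityMeasure μ.inv := by
    constructor
    rw [Measure.inv_apply]
    simp
  ext s hs
  have hmeas : Measurable (fun p : G × G => s.indicator (fun _ => (1 : ENNReal)) (p.1 * p.2)) :=
    (measurable_const.indicator hs).comp (measurable_fst.mul measurable_snd)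
  have key : ∫⁻ x, s.indicator (fun _ => (1 : ENNReal)) x ∂μ
      = ∫⁻ x, s.indicator (fun _ => (1 : ENNReal)) x ∂μ.inv := by
    calc ∫⁻ x, s.indicator (fun _ => (1 : ENNReal)) x ∂μ
        = ∫⁻ y, ∫⁻ x, s.indicator (fun _ => (1 : ENNReal)) (y * x) ∂μ ∂μ.inv := by
          simp only [lintegral_mul_left_eq_self]
          rw [lintegral_const, measure_univ, mul_one]
      _ = ∫⁻ x, ∫⁻ y, s.indicator (fun _ => (1 : ENNReal)) (y * x) ∂μ.inv ∂μ :=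
          lintegral_lintegral_swap hmeas.aemeasurable
      _ = ∫⁻ x, ∫⁻ y, s.indicator (fun _ => (1 : ENNReal)) y ∂μ.inv ∂μ := by
          simp only [lintegral_mul_right_eq_self]
      _ = ∫⁻ y, s.indicator (fun _ => (1 : ENNReal)) y ∂μ.inv := by
          rw [lintegral_const, measure_univ, mul_one]
  have h1 : ∫⁻ x, s.indicator (fun _ => (1 : ENNReal)) x ∂μ = μ s := by
    simp [lintegral_indicator, hs]
  have h2 : ∫⁻ x, s.indicator (fun _ => (1 : ENNReal)) x ∂μ.inv = μ.inv s := by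
    simp [lintegral_indicator, hs]
  rw [h1, h2] at key
  exact key.symm

lemma aux_isMulRightInvariant : μ.IsMulRightInvariant := by
  have h := aux_inv_eq_self μ
  have : (μ.inv).IsMulRightInvariant := inferInstance
  rwa [h] at this

end RightInv

/-- The diagonal element `diag (u, conj u)` of `SU(2)`, for `|u| = 1`. -/
noncomputable def diagSU (u : ℂ) (hu : u * starRingEnd ℂ u = 1) : SU2 :=
  ⟨!![u, 0; 0, starRingEnd ℂ u], by
    rw [Matrix.mem_specialUnitaryGroup_iff]
    constructor
    · rw [Matrix.mem_unitaryGroup_iff]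
      ext i j
      fin_cases i <;> fin_cases j <;>
        simp [Matrix.mul_apply, Matrix.star_eq_conjTranspose, Matrix.conjTranspose_apply,
          Fin.sum_univ_two, hu, mul_comm u (starRingEnd ℂ u)] <;>
        simpa [mul_comm] using hu
    · simp [Matrix.det_fin_two, hu]⟩

lemma mul_diag_00 (u : ℂ) (hu : u * starRingEnd ℂ u = 1) (κ : SU2) :
    ((κ * diagSU u hu : SU2) : Matrix (Fin 2) (Fin 2) ℂ) 0 0
      = (κ : Matrix (Fin 2) (Fin 2) ℂ) 0 0 * u := by
  show ((κ : Matrix (Fin 2) (Fin 2) ℂ) * ((diagSU u hu : SU2) : Matrix (Fin 2) (Fin 2) ℂ)) 0 0 = _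
  rw [Matrix.mul_apply, Fin.sum_univ_two]
  simp [diagSU]

lemma mul_diag_01 (u : ℂ) (hu : u * starRingEnd ℂ u = 1) (κ : SU2) :
    ((κ * diagSU u hu : SU2) : Matrix (Fin 2) (Fin 2) ℂ) 0 1
      = (κ : Matrix (Fin 2) (Fin 2) ℂ) 0 1 * starRingEnd ℂ u := by
  show ((κ : Matrix (Fin 2) (Fin 2) ℂ) * ((diagSU u hu : SU2) : Matrix (Fin 2) (Fin 2) ℂ)) 0 1 = _
  rw [Matrix.mul_apply, Fin.sum_univ_two]
  simp [diagSU]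

/-- Transformation of `etilde` under right multiplication by a diagonal element. -/
lemma etilde_mul_diag (n₀ n : ℤ) (k : ℕ) (u : ℂ) (hu : u * starRingEnd ℂ u = 1) (κ : SU2) :
    u ^ (2 * k) * etilde n₀ n k (κ * diagSU u hu)
      = u ^ (((n + n₀) / 2).toNat + ((n - n₀) / 2).toNat) * etilde n₀ n k κ := by
  unfold etilde
  rw [mul_diag_00 u hu κ, mul_diag_01 u hu κ]
  generalize (κ : Matrix (Fin 2) (Fin 2) ℂ) 0 0 = z₁
  generalize (κ : Matrix (Fin 2) (Fin 2) ℂ) 0 1 = z₂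
  generalize ((n + n₀) / 2).toNat = a
  generalize ((n - n₀) / 2).toNat = b
  rw [mul_left_comm, mul_left_comm (u ^ (a + b))]
  congr 1
  rw [Finset.mul_sum, Finset.mul_sum]
  apply Finset.sum_congr rfl
  intro j hj
  rw [Finset.mem_range, Nat.lt_succ_iff] at hj
  by_cases hja : j ≤ a
  · by_cases hkb : k - j ≤ b
    · obtain ⟨a', rfl⟩ : ∃ a', a = j + a' := ⟨a - j, by omega⟩
      obtain ⟨j', rfl⟩ : ∃ j', k = j + j' := ⟨k - j, by omega⟩
      obtain ⟨b', rfl⟩ : ∃ b', b = j' + b' := ⟨b - j', by omega⟩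
      have hnum1 : j + a' - j = a' := by omega
      have hnum2 : j + j' - j = j' := by omega
      have hnum3 : j' + b' - j' = b' := by omega
      rw [hnum1, hnum2, hnum3]
      have h1 : u ^ (j + j') * (starRingEnd ℂ u) ^ (j + j') = 1 := by
        rw [← mul_pow, hu, one_pow]
      rw [map_mul, map_mul, Complex.conj_conj]
      linear_combination ((-1 : ℂ) ^ j' * (((j + a').choose j : ℕ) : ℂ) *
        (((j' + b').choose j' : ℕ) : ℂ) * z₁ ^ a' * z₂ ^ j *
        (starRingEnd ℂ z₁) ^ j' * (starRingEnd ℂ z₂) ^ b' *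
        u ^ (j + j' + a' + b')) * h1
    · push_neg at hkb
      simp [Nat.choose_eq_zero_of_lt hkb]
  · push_neg at hja
    simp [Nat.choose_eq_zero_of_lt hja]

theorem integral_etilde_mul_conj_etilde_eq_zero'
    (n₀ n : ℤ) (hn : |n₀| ≤ n)
    (k k' : ℕ) (hk' : (k' : ℤ) ≤ n) (hkk' : k < k')
    (μ : Measure SU2)
    [IsProbabilityMeasure μ] [μ.IsMulLeftInvariant] :
    (∫ κ, etilde n₀ n k κ * starRingEnd ℂ (etilde n₀ n k' κ) ∂μ) = 0 := by
  haveI : μ.IsMulRightInvariant := aux_isMulRightInvariant μ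
  set nn : ℕ := n.toNat with hnn
  have hk'n : k' ≤ nn := by
    have h0 : (0:ℤ) ≤ n := le_trans (abs_nonneg n₀) hn
    omega
  set r : ℝ := π / (nn+1) with hr
  set u : ℂ := Complex.exp ((r : ℝ) * Complex.I) with hudef
  have hv : starRingEnd ℂ u = Complex.exp ((-r : ℝ) * Complex.I) := by
    rw [hudef, ← Complex.exp_conj]
    congr 1
    simp [Complex.conj_ofReal]
  have hu : u * starRingEnd ℂ u = 1 := by
    rw [hv, hudef, ← Complex.exp_add]
    rw [show ((r:ℝ) : ℂ) * Complex.I + ((-r : ℝ) : ℂ) * Complex.I = 0 by push_cast; ring]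
    exact Complex.exp_zero
  set v : ℂ := starRingEnd ℂ u with hvdef
  set g : SU2 := diagSU u hu with hg
  set N : ℕ := ((n + n₀) / 2).toNat + ((n - n₀) / 2).toNat with hN
  set c : ℂ := u ^ (2*k) * v ^ (2*k') with hc
  -- pointwise transformation
  have hpoint : ∀ κ : SU2, c * (etilde n₀ n k (κ * g) * starRingEnd ℂ (etilde n₀ n k' (κ * g)))
      = etilde n₀ n k κ * starRingEnd ℂ (etilde n₀ n k' κ) := by
    intro κ
    have h1 := etilde_mul_diag n₀ n k u hu κ
    have h2 := congrArg (starRingEnd ℂ) (etilde_mul_diag n₀ n k' u hu κ)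
    simp only [map_mul, map_pow] at h2
    calc c * (etilde n₀ n k (κ * g) * starRingEnd ℂ (etilde n₀ n k' (κ * g)))
        = (u ^ (2*k) * etilde n₀ n k (κ * g)) *
            (v ^ (2*k') * starRingEnd ℂ (etilde n₀ n k' (κ * g))) := by rw [hc]; ring
      _ = (u ^ N * etilde n₀ n k κ) * (v ^ N * starRingEnd ℂ (etilde n₀ n k' κ)) := by
          rw [h1, h2]
      _ = (u * v) ^ N * (etilde n₀ n k κ * starRingEnd ℂ (etilde n₀ n k' κ)) := by
          rw [mul_pow]; ring
      _ = etilde n₀ n k κ * starRingEnd ℂ (etilde n₀ n k' κ) := by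
          rw [hvdef, hu, one_pow, one_mul]
  -- the integral identity
  set I : ℂ := ∫ κ, etilde n₀ n k κ * starRingEnd ℂ (etilde n₀ n k' κ) ∂μ with hI
  have key : I = c * I := by
    calc I = ∫ κ, c * (etilde n₀ n k (κ * g) * starRingEnd ℂ (etilde n₀ n k' (κ * g))) ∂μ := by
            rw [hI]
            exact integral_congr_ae (Filter.Eventually.of_forall fun κ => (hpoint κ).symm)
      _ = c * ∫ κ, etilde n₀ n k (κ * g) * starRingEnd ℂ (etilde n₀ n k' (κ * g)) ∂μ :=
            integral_const_mul c _
      _ = c * I := by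
            rw [hI, integral_mul_right_eq_self
              (fun κ => etilde n₀ n k κ * starRingEnd ℂ (etilde n₀ n k' κ)) g]
  -- c ≠ 1
  have hcne : c ≠ 1 := by
    rw [hc, hv, hudef, ← Complex.exp_nat_mul, ← Complex.exp_nat_mul, ← Complex.exp_add]
    have hexp : ((2*k : ℕ) : ℂ) * (((r:ℝ)) * Complex.I) + ((2*k' : ℕ) : ℂ) * (((-r:ℝ)) * Complex.I)
        = (((2*(k:ℝ) - 2*k') * r : ℝ)) * Complex.I := by
      push_cast
      ring
    rw [hexp]
    intro h
    rw [Complex.exp_eq_one_iff] at h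
    obtain ⟨m, hm⟩ := h
    have him := congrArg Complex.im hm
    simp at him
    rw [hr] at him
    have hnn1 : (0:ℝ) < (nn:ℝ) + 1 := by positivity
    have hpi := Real.pi_pos
    have heqR : 2*(k:ℝ) - 2*(k':ℝ) = 2*(m:ℝ)*((nn:ℝ)+1) := by
      field_simp at him
      nlinarith [him]
    have heq : (2*(k:ℤ) - 2*k') = 2*m*((nn:ℤ)+1) := by exact_mod_cast heqR
    have hm0 : m < 0 := by nlinarith
    nlinarith [mul_le_mul_of_nonneg_right (show m ≤ -1 by omega)
      (show (0:ℤ) ≤ (nn:ℤ)+1 by positivity)]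
  have h0 : (c - 1) * I = 0 := by linear_combination -key
  rcases mul_eq_zero.mp h0 with h | h
  · exact absurd (by linear_combination h) hcne
  · exact h

end SU2Aux

/-- Orthogonality of the spherical harmonics `ẽ_{n,k}^{n₀}`, `0 ≤ k ≤ n`, in `L²(SU(2))`
with respect to the Haar probability measure (i.e. any left-invariant Borel probability
measure): for `k ≠ k′`, `∫_{SU(2)} ẽ_{n,k}^{n₀} · conj(ẽ_{n,k′}^{n₀}) dκ = 0`. -/


theorem integral_etilde_mul_conj_etilde_eq_zero
    (n₀ n : ℤ) (hn : |n₀| ≤ n) (hpar : (2 : ℤ) ∣ (n - n₀))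
    (k k' : ℕ) (hk : (k : ℤ) ≤ n) (hk' : (k' : ℤ) ≤ n) (hkk' : k ≠ k')
    (μ : Measure (Matrix.specialUnitaryGroup (Fin 2) ℂ))
    [IsProbabilityMeasure μ] [μ.IsMulLeftInvariant] :
    (∫ κ, etilde n₀ n k κ * starRingEnd ℂ (etilde n₀ n k' κ) ∂μ) = 0 := by
  rcases lt_or_gt_of_ne hkk' with h | h
  · exact SU2Aux.integral_etilde_mul_conj_etilde_eq_zero' n₀ n hn k k' hk' h μ
  · have h0 := SU2Aux.integral_etilde_mul_conj_etilde_eq_zero' n₀ n hn k' k hk h μ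
    calc ∫ κ, etilde n₀ n k κ * starRingEnd ℂ (etilde n₀ n k' κ) ∂μ
        = ∫ κ, starRingEnd ℂ (etilde n₀ n k' κ * starRingEnd ℂ (etilde n₀ n k κ)) ∂μ := by
          refine integral_congr_ae (Filter.Eventually.of_forall fun κ => ?_)
          simp [mul_comm]
      _ = starRingEnd ℂ (∫ κ, etilde n₀ n k' κ * starRingEnd ℂ (etilde n₀ n k κ) ∂μ) :=
          integral_conj
      _ = 0 := by rw [h0]; simp
end

section
/- Let n₀ ∈ ℤ, μ ∈ ℝ, and let n be an integer with n ≥ |n₀| and n ≡ n₀ (mod 2); set M = (n − |n₀|)/2 and define m: ℝ → ℂ by m(y) = i^{−n₀} · ∏_{k=0}^{M−1} (1 − i(2y+μ) + |n₀|/2 + k) / (1 + i(2y+μ) + |n₀|/2 + k). Then: (a) |m(y)| = 1 for all y ∈ ℝ; (b) m′(y)/m(y) = −4i Σ_{k=0}^{M−1} (1 + |n₀|/2 + k) / ((2y+μ)² + (1 + |n₀|/2 + k)²) for all y ∈ ℝ; (c) if n ≥ |n₀| + 2 then |m′(y)| ≤ 4·(2/(|n₀|+2) + log(n/(|n₀|+2)))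 for all y ∈ ℝ (and m′ ≡ 0 if n = |n₀|). -/
open MeasureTheory Real Complex

noncomputable def mF (a μ : ℝ) (k : ℕ) (y : ℝ) : ℂ :=
  (1 : ℂ) - Complex.I * (2 * (y : ℂ) + (μ : ℂ)) + (a : ℂ) / 2 + (k : ℂ)
noncomputable def mG (a μ : ℝ) (k : ℕ) (y : ℝ) : ℂ :=
  (1 : ℂ) + Complex.I * (2 * (y : ℂ) + (μ : ℂ)) + (a : ℂ) / 2 + (k : ℂ)

lemma mG_re (a μ : ℝ) (k : ℕ) (y : ℝ) : (mG a μ k y).re = 1 + a/2 + k := by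
  simp [mG]

lemma mG_ne (a μ : ℝ) (ha : 0 ≤ a) (k : ℕ) (y : ℝ) : mG a μ k y ≠ 0 := by
  intro h
  have := congrArg Complex.re h
  rw [mG_re] at this
  simp at this
  have : (0:ℝ) ≤ (k:ℝ) := Nat.cast_nonneg k
  linarith

lemma mF_conj (a μ : ℝ) (k : ℕ) (y : ℝ) : mF a μ k y = starRingEnd ℂ (mG a μ k y) := by
  simp [mF, mG, map_add, map_sub, map_mul, Complex.conj_I, Complex.conj_ofReal, map_ofNat]
  ring

lemma mF_ne (a μ : ℝ) (ha : 0 ≤ a) (k : ℕ) (y : ℝ) : mF a μ k y ≠ 0 := by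
  rw [mF_conj]; simpa using mG_ne a μ ha k y

lemma mF_hasDeriv (a μ : ℝ) (k : ℕ) (y : ℝ) :
    HasDerivAt (mF a μ k) (-2 * Complex.I) y := by
  have h1 : HasDerivAt (fun y : ℝ => (y : ℂ)) 1 y := by
    simpa using (hasDerivAt_id y).ofReal_comp
  have h2 := (((h1.const_mul (2:ℂ)).add_const (μ:ℂ)).const_mul Complex.I).const_sub 1
  have h3 := (h2.add_const ((a:ℂ)/2)).add_const (k:ℂ)
  rw [show (-2 * Complex.I) = -(Complex.I * (2 * 1)) by ring]
  exact h3

lemma mG_hasDeriv (a μ : ℝ) (k : ℕ) (y : ℝ) :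
    HasDerivAt (mG a μ k) (2 * Complex.I) y := by
  have h1 : HasDerivAt (fun y : ℝ => (y : ℂ)) 1 y := by
    simpa using (hasDerivAt_id y).ofReal_comp
  have h2 := ((h1.const_mul (2:ℂ)).add_const (μ:ℂ)).const_mul Complex.I
  have h3 := (((h2.const_add 1).add_const ((a:ℂ)/2)).add_const (k:ℂ))
  rw [show (2 * Complex.I) = Complex.I * (2 * 1) by ring]
  exact h3

lemma mFG_mul (a μ : ℝ) (k : ℕ) (y : ℝ) :
    mF a μ k y * mG a μ k y = (((2*y+μ)^2 + (1+a/2+(k:ℝ))^2 : ℝ) : ℂ) := by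
  simp only [mF, mG]
  push_cast
  linear_combination (-(2*(y:ℂ)+(μ:ℂ))^2) * Complex.I_sq
noncomputable def mP (a μ : ℝ) (M : ℕ) (y : ℝ) : ℂ :=
  ∏ k ∈ Finset.range M, mF a μ k y / mG a μ k y

lemma factor_logDeriv (a μ : ℝ) (ha : 0 ≤ a) (k : ℕ) (y : ℝ) :
    logDeriv (fun y => mF a μ k y / mG a μ k y) y =
      -4 * Complex.I * (((1+a/2+(k:ℝ)) : ℝ) : ℂ) / (((2*y+μ)^2 + (1+a/2+(k:ℝ))^2 : ℝ) : ℂ) := by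
  rw [logDeriv_div y (mF_ne a μ ha k y) (mG_ne a μ ha k y)
      (mF_hasDeriv a μ k y).differentiableAt (mG_hasDeriv a μ k y).differentiableAt]
  rw [logDeriv_apply, logDeriv_apply, (mF_hasDeriv a μ k y).deriv, (mG_hasDeriv a μ k y).deriv]
  rw [div_sub_div _ _ (mF_ne a μ ha k y) (mG_ne a μ ha k y), mFG_mul]
  rw [div_eq_div_iff (by exact_mod_cast (by positivity : ((2*y+μ)^2 + (1+a/2+(k:ℝ))^2 : ℝ) ≠ 0))
      (by exact_mod_cast (by positivity : ((2*y+μ)^2 + (1+a/2+(k:ℝ))^2 : ℝ) ≠ 0))]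
  have hsum : mF a μ k y + mG a μ k y = 2 * (((1+a/2+(k:ℝ)) : ℝ) : ℂ) := by
    simp only [mF, mG]; push_cast; ring
  linear_combination (-2*Complex.I*(((2*y+μ)^2 + (1+a/2+(k:ℝ))^2 : ℝ) : ℂ)) * hsum

lemma mP_logDeriv (a μ : ℝ) (ha : 0 ≤ a) (M : ℕ) (y : ℝ) :
    logDeriv (mP a μ M) y =
      ∑ k ∈ Finset.range M,
        -4 * Complex.I * (((1+a/2+(k:ℝ)) : ℝ) : ℂ) / (((2*y+μ)^2 + (1+a/2+(k:ℝ))^2 : ℝ) : ℂ) := by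
  have := logDeriv_prod (s := Finset.range M) (f := fun k y => mF a μ k y / mG a μ k y) (x := y)
    (fun k _ => div_ne_zero (mF_ne a μ ha k y) (mG_ne a μ ha k y))
    (fun k _ => ((mF_hasDeriv a μ k y).differentiableAt).div
      ((mG_hasDeriv a μ k y).differentiableAt) (mG_ne a μ ha k y))
  have h2 : logDeriv (mP a μ M) y
      = ∑ k ∈ Finset.range M, logDeriv (fun y => mF a μ k y / mG a μ k y) y := this
  rw [h2]
  exact Finset.sum_congr rfl fun k _ => factor_logDeriv a μ ha k y

lemma mP_diff (a μ : ℝ) (ha : 0 ≤ a) (M : ℕ) (y : ℝ) :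
    DifferentiableAt ℝ (mP a μ M) y := by
  have : DifferentiableAt ℝ (fun z => ∏ k ∈ Finset.range M, mF a μ k z / mG a μ k z) y :=
    DifferentiableAt.fun_finsetProd (fun k _ => ((mF_hasDeriv a μ k y).differentiableAt).div
      ((mG_hasDeriv a μ k y).differentiableAt) (mG_ne a μ ha k y))
  exact this

lemma mP_abs (a μ : ℝ) (ha : 0 ≤ a) (M : ℕ) (y : ℝ) : ‖mP a μ M y‖ = 1 := by
  rw [mP, norm_prod]
  apply Finset.prod_eq_one
  intro k _
  rw [norm_div, mF_conj, Complex.norm_conj]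
  exact div_self (by simpa using (mG_ne a μ ha k y))
lemma sum_recip_bound (a : ℝ) (ha : 0 ≤ a) (M' : ℕ) (t : ℝ) :
    ∑ k ∈ Finset.range (M'+1), (1 + a/2 + (k:ℝ)) / (t^2 + (1 + a/2 + (k:ℝ))^2)
      ≤ 2/(a+2) + Real.log ((a + 2*(M'+1))/(a+2)) := by
  set f : ℕ → ℝ := fun k => 2/(a+2+2*(k:ℝ)) with hf
  set g : ℕ → ℝ := fun i => Real.log (a+2*(i:ℝ)+2) with hg
  have step1 : ∀ k : ℕ, (1 + a/2 + (k:ℝ)) / (t^2 + (1 + a/2 + (k:ℝ))^2) ≤ f k := by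
    intro k
    have hc : (0:ℝ) < 1 + a/2 + k := by positivity
    have h1 : (1 + a/2 + (k:ℝ)) / (t^2 + (1 + a/2 + (k:ℝ))^2) ≤ 1/(1+a/2+k) := by
      rw [div_le_div_iff₀ (by positivity) hc]
      nlinarith [sq_nonneg t]
    have h2 : 1/(1+a/2+(k:ℝ)) = f k := by
      rw [hf]
      rw [div_eq_div_iff (ne_of_gt hc) (by positivity)]; ring
    linarith
  have key : ∀ i : ℕ, f (i+1) ≤ g (i+1) - g i := by
    intro i
    have hu : (0:ℝ) < a+2*((i:ℝ)+1)+2 := by positivity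
    have hv : (0:ℝ) < a+2*(i:ℝ)+2 := by positivity
    have hlog := Real.log_le_sub_one_of_pos (show (0:ℝ) < (a+2*(i:ℝ)+2)/(a+2*((i:ℝ)+1)+2) by positivity)
    rw [Real.log_div (ne_of_gt hv) (ne_of_gt hu)] at hlog
    have hq : (a+2*(i:ℝ)+2)/(a+2*((i:ℝ)+1)+2) - 1 = -(2/(a+2*((i:ℝ)+1)+2)) := by
      field_simp
      ring
    rw [hq] at hlog
    have hfeq : f (i+1) = 2/(a+2*((i:ℝ)+1)+2) := by
      rw [hf]; push_cast; ring_nf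
    have hgeq : g (i+1) = Real.log (a+2*((i:ℝ)+1)+2) := by
      rw [hg]; push_cast; ring_nf
    rw [hfeq, hgeq, hg]
    linarith
  calc ∑ k ∈ Finset.range (M'+1), (1 + a/2 + (k:ℝ)) / (t^2 + (1 + a/2 + (k:ℝ))^2)
      ≤ ∑ k ∈ Finset.range (M'+1), f k := Finset.sum_le_sum fun k _ => step1 k
    _ = (∑ i ∈ Finset.range M', f (i+1)) + f 0 := Finset.sum_range_succ' f M'
    _ ≤ (∑ i ∈ Finset.range M', (g (i+1) - g i)) + 2/(a+2) := by
        apply add_le_add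
        · exact Finset.sum_le_sum fun i _ => key i
        · rw [hf]; norm_num
    _ = (g M' - g 0) + 2/(a+2) := by rw [Finset.sum_range_sub g M']
    _ = 2/(a+2) + Real.log ((a + 2*(M'+1))/(a+2)) := by
        rw [Real.log_div (by positivity) (by positivity), hg]
        push_cast
        ring_nf

/-- Properties of the unitary-axis value of the normalized local intertwining operator at a
complex place on the `K`-type of degree `n`:
`m(y) = i^{-n₀} ∏_{k=0}^{M-1} (1 - i(2y+μ) + |n₀|/2 + k)/(1 + i(2y+μ) + |n₀|/2 + k)`
with `n = |n₀| + 2M` has modulus one, its logarithmic derivative is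
`-4i Σ_{k=0}^{M-1} (1 + |n₀|/2 + k)/((2y+μ)² + (1 + |n₀|/2 + k)²)`, and its derivative is
bounded by `4(2/(|n₀|+2) + log(n/(|n₀|+2)))` when `n ≥ |n₀| + 2` (and vanishes when
`n = |n₀|`). -/
theorem complex_place_intertwining_scalar
    (n₀ n : ℤ) (μ : ℝ) (M : ℕ) (hM : n = |n₀| + 2 * M)
    (m : ℝ → ℂ)
    (hm : ∀ y : ℝ, m y = Complex.I ^ (-n₀) *
      ∏ k ∈ Finset.range M,
        (((1 : ℂ) - Complex.I * (2 * (y : ℂ) + (μ : ℂ)) + ((|n₀| : ℤ) : ℂ) / 2 + (k : ℂ)) /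
         ((1 : ℂ) + Complex.I * (2 * (y : ℂ) + (μ : ℂ)) + ((|n₀| : ℤ) : ℂ) / 2 + (k : ℂ)))) :
    (∀ y : ℝ, ‖m y‖ = 1)
    ∧ (∀ y : ℝ, deriv m y / m y =
        (-4) * Complex.I *
          ((∑ k ∈ Finset.range M,
              (1 + (|n₀| : ℝ) / 2 + (k : ℝ)) /
                ((2 * y + μ) ^ 2 + (1 + (|n₀| : ℝ) / 2 + (k : ℝ)) ^ 2) : ℝ) : ℂ))
    ∧ (|n₀| + 2 ≤ n → ∀ y : ℝ,
        ‖deriv m y‖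
          ≤ 4 * (2 / ((|n₀| : ℝ) + 2) + Real.log ((n : ℝ) / ((|n₀| : ℝ) + 2))))
    ∧ (n = |n₀| → ∀ y : ℝ, deriv m y = 0) := by
  simp only [← Int.cast_abs]
  set a : ℝ := ((|n₀| : ℤ) : ℝ) with ha
  have ha0 : 0 ≤ a := by rw [ha]; exact_mod_cast abs_nonneg n₀
  have hmf : m = fun y : ℝ => Complex.I ^ (-n₀) * mP a μ M y := by
    funext y
    rw [hm y]
    congr 1
  have hC : Complex.I ^ (-n₀) ≠ 0 := zpow_ne_zero _ Complex.I_ne_zero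
  have habs : ∀ y, ‖m y‖ = 1 := by
    intro y
    rw [hmf]
    simp only
    rw [norm_mul, norm_zpow, Complex.norm_I, one_zpow, one_mul, mP_abs a μ ha0 M y]
  have hm0 : ∀ y, m y ≠ 0 := by
    intro y h
    have := habs y
    rw [h] at this
    simp at this
  have hld : ∀ y : ℝ, logDeriv m y = (-4) * Complex.I *
      ((∑ k ∈ Finset.range M,
          (1 + a / 2 + (k : ℝ)) / ((2 * y + μ) ^ 2 + (1 + a / 2 + (k : ℝ)) ^ 2) : ℝ) : ℂ) := by
    intro y
    rw [hmf, logDeriv_const_mul y _ hC, mP_logDeriv a μ ha0 M y, Complex.ofReal_sum,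
      Finset.mul_sum]
    apply Finset.sum_congr rfl
    intro k _
    rw [Complex.ofReal_div]
    ring
  have hderiv : ∀ y, deriv m y = logDeriv m y * m y := by
    intro y
    rw [logDeriv_apply, div_mul_cancel₀ _ (hm0 y)]
  refine ⟨habs, ?_, ?_, ?_⟩
  · intro y
    rw [← logDeriv_apply]
    exact hld y
  · intro hn y
    obtain ⟨M', rfl⟩ : ∃ M', M = M' + 1 := ⟨M - 1, by omega⟩
    set s : ℝ := ∑ k ∈ Finset.range (M' + 1),
        (1 + a / 2 + (k : ℝ)) / ((2 * y + μ) ^ 2 + (1 + a / 2 + (k : ℝ)) ^ 2) with hs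
    have hs0 : 0 ≤ s := Finset.sum_nonneg fun k _ => by positivity
    have habsd : ‖deriv m y‖ = 4 * s := by
      rw [hderiv y, norm_mul, habs y, mul_one, hld y, norm_mul, norm_mul, Complex.norm_real,
        Real.norm_of_nonneg hs0]
      norm_num
    rw [habsd]
    have hbd : s ≤ 2 / (a + 2) + Real.log ((a + 2 * (M' + 1)) / (a + 2)) := by
      have := sum_recip_bound a ha0 M' (2 * y + μ)
      simpa [hs] using this
    have hn' : (n : ℝ) = a + 2 * (M' + 1) := by
      rw [ha]; exact_mod_cast congrArg (Int.cast : ℤ → ℝ) hM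
    rw [hn']
    linarith
  · intro hn y
    have hM0 : M = 0 := by omega
    subst hM0
    rw [hmf]
    simp only [mP, Finset.range_zero, Finset.prod_empty, mul_one]
    exact deriv_const y _
end

section
/- Let n₀ ∈ {0, 1}, μ ∈ ℝ, and let n be an integer with |n| ≥ n₀ and |n| ≡ n₀ (mod 2); set M = (|n| − n₀)/2 and define m: ℝ → ℂ by m(y) = (−1)^{(|n|−n)/2} · ∏_{k=0}^{M−1} (1 − i(2y+μ) + n₀ + 2k) / (1 + i(2y+μ) + n₀ + 2k). Then: (a) |m(y)| = 1 for all y ∈ ℝ; (b) if |n| ≥ n₀ + 2 then |m′(y)| ≤ 2·(2/(n₀+1) + log((|n|−1)/(n₀+1))) for all y ∈ ℝ (and m′ ≡ 0 if |n| = n₀). -/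
open MeasureTheory Real Complex

lemma aux_log_step (x : ℝ) (hx : 0 < x) : 2 / (x + 2) ≤ Real.log ((x + 2) / x) := by
  have h1 : Real.log (x / (x + 2)) ≤ x / (x + 2) - 1 :=
    Real.log_le_sub_one_of_pos (by positivity)
  have h2 : Real.log ((x + 2) / x) = - Real.log (x / (x + 2)) := by
    rw [← Real.log_inv]; congr 1; field_simp
  have h3 : x / (x + 2) - 1 = - (2 / (x + 2)) := by field_simp; ring
  rw [h2]; linarith [h3 ▸ h1]

lemma aux_sum_bound (c : ℝ) (hc : 1 ≤ c) (M : ℕ) :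
    ∑ k ∈ Finset.range (M + 1), 4 / (c + 2 * k) ≤
      2 * (2 / c + Real.log ((c + 2 * M) / c)) := by
  have hc0 : 0 < c := lt_of_lt_of_le one_pos hc
  induction M with
  | zero =>
      simp only [zero_add, Finset.sum_range_one, Nat.cast_zero, Nat.cast_ofNat, mul_zero,
        add_zero, div_self (ne_of_gt hc0), Real.log_one]
      exact le_of_eq (by ring)
  | succ M ih =>
      rw [Finset.sum_range_succ]
      have hstep : 2 / (c + 2 * M + 2) ≤ Real.log ((c + 2 * M + 2) / (c + 2 * M)) := by
        have := aux_log_step (c + 2 * M) (by positivity)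
        linarith [this]
      have htel : Real.log ((c + 2 * M) / c) + Real.log ((c + 2 * M + 2) / (c + 2 * M))
          = Real.log ((c + 2 * ((M : ℝ) + 1)) / c) := by
        rw [← Real.log_mul (by positivity) (by positivity)]
        congr 1
        field_simp
        ring
      have heq : 4 / (c + 2 * ((M : ℝ) + 1)) = 2 * (2 / (c + 2 * M + 2)) := by
        rw [show c + 2 * ((M:ℝ) + 1) = c + 2*M + 2 by ring]; ring
      push_cast at ih ⊢
      linarith [ih, hstep, htel, heq]

/-- Properties of the unitary-axis value of the normalized local intertwining operator at a
real place on the `SO(2)`-type of weight `n`: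
`m(y) = (-1)^{(|n|-n)/2} ∏_{k=0}^{M-1} (1 - i(2y+μ) + n₀ + 2k)/(1 + i(2y+μ) + n₀ + 2k)`
with `|n| = n₀ + 2M`, `n₀ ∈ {0,1}`, has modulus one, and its derivative is bounded by
`2(2/(n₀+1) + log((|n|-1)/(n₀+1)))` when `|n| ≥ n₀ + 2` (and vanishes when `|n| = n₀`). -/
theorem real_place_intertwining_scalar
    (n₀ : ℤ) (hn₀ : n₀ = 0 ∨ n₀ = 1) (n : ℤ) (μ : ℝ) (M : ℕ) (hM : |n| = n₀ + 2 * M)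
    (m : ℝ → ℂ)
    (hm : ∀ y : ℝ, m y = (-1 : ℂ) ^ ((|n| - n) / 2) *
      ∏ k ∈ Finset.range M,
        (((1 : ℂ) - Complex.I * (2 * (y : ℂ) + (μ : ℂ)) + (n₀ : ℂ) + 2 * (k : ℂ)) /
         ((1 : ℂ) + Complex.I * (2 * (y : ℂ) + (μ : ℂ)) + (n₀ : ℂ) + 2 * (k : ℂ)))) :
    (∀ y : ℝ, ‖m y‖ = 1)
    ∧ (n₀ + 2 ≤ |n| → ∀ y : ℝ,
        ‖deriv m y‖
          ≤ 2 * (2 / ((n₀ : ℝ) + 1) + Real.log ((((|n| : ℤ) : ℝ) - 1) / ((n₀ : ℝ) + 1))))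
    ∧ (|n| = n₀ → ∀ y : ℝ, deriv m y = 0) := by
  have hn0 : (0:ℤ) ≤ n₀ := by rcases hn₀ with h | h <;> simp [h]
  have hn0R : (0:ℝ) ≤ (n₀:ℝ) := by exact_mod_cast hn0
  set c0 : ℂ := (-1 : ℂ) ^ ((|n| - n) / 2) with hc0def
  set g : ℕ → ℝ → ℂ := fun k y =>
      (((1 : ℂ) - Complex.I * (2 * (y : ℂ) + (μ : ℂ)) + (n₀ : ℂ) + 2 * (k : ℂ)) /
       ((1 : ℂ) + Complex.I * (2 * (y : ℂ) + (μ : ℂ)) + (n₀ : ℂ) + 2 * (k : ℂ))) with hgdef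
  set a : ℕ → ℝ := fun k => 1 + (n₀ : ℝ) + 2 * k with hadef
  have ha1 : ∀ k : ℕ, 1 ≤ a k := by
    intro k
    have hk : (0:ℝ) ≤ (k:ℝ) := Nat.cast_nonneg k
    simp only [hadef]
    linarith
  have ha0 : ∀ k : ℕ, 0 < a k := fun k => lt_of_lt_of_le one_pos (ha1 k)
  -- denominator and numerator in canonical form
  have hDeq : ∀ (k : ℕ) (y : ℝ),
      ((1 : ℂ) + Complex.I * (2 * (y : ℂ) + (μ : ℂ)) + (n₀ : ℂ) + 2 * (k : ℂ))
        = ((a k : ℝ) : ℂ) + ((2*y+μ : ℝ) : ℂ) * Complex.I := by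
    intro k y; simp only [hadef]; push_cast; ring
  have hNeq : ∀ (k : ℕ) (y : ℝ),
      ((1 : ℂ) - Complex.I * (2 * (y : ℂ) + (μ : ℂ)) + (n₀ : ℂ) + 2 * (k : ℂ))
        = ((a k : ℝ) : ℂ) + ((-(2*y+μ) : ℝ) : ℂ) * Complex.I := by
    intro k y; simp only [hadef]; push_cast; ring
  have habsD : ∀ (k : ℕ) (y : ℝ),
      ‖((1 : ℂ) + Complex.I * (2 * (y : ℂ) + (μ : ℂ)) + (n₀ : ℂ) + 2 * (k : ℂ))‖
        = Real.sqrt ((a k)^2 + (2*y+μ)^2) := by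
    intro k y; rw [hDeq k y, Complex.norm_add_mul_I]
  have habsN : ∀ (k : ℕ) (y : ℝ),
      ‖((1 : ℂ) - Complex.I * (2 * (y : ℂ) + (μ : ℂ)) + (n₀ : ℂ) + 2 * (k : ℂ))‖
        = Real.sqrt ((a k)^2 + (2*y+μ)^2) := by
    intro k y; rw [hNeq k y, Complex.norm_add_mul_I, neg_pow, neg_pow]; ring_nf
  have hsqrt_pos : ∀ (k : ℕ) (y : ℝ), 0 < Real.sqrt ((a k)^2 + (2*y+μ)^2) := by
    intro k y
    apply Real.sqrt_pos.2
    nlinarith [ha0 k, sq_nonneg (2*y+μ)]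
  have hDne : ∀ (k : ℕ) (y : ℝ),
      ((1 : ℂ) + Complex.I * (2 * (y : ℂ) + (μ : ℂ)) + (n₀ : ℂ) + 2 * (k : ℂ)) ≠ 0 := by
    intro k y h
    have := habsD k y
    rw [h] at this
    simp at this
    exact absurd this.symm (ne_of_gt (hsqrt_pos k y))
  have habsg : ∀ (k : ℕ) (y : ℝ), ‖g k y‖ = 1 := by
    intro k y
    simp only [hgdef, norm_div, habsN k y, habsD k y]
    exact div_self (ne_of_gt (hsqrt_pos k y))
  have habs_c0 : ‖c0‖ = 1 := by
    rw [hc0def, norm_zpow]; simp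
  -- derivative of each factor
  set g' : ℕ → ℝ → ℂ := fun k y =>
      (-4) * ((a k : ℝ) : ℂ) * Complex.I /
        (((1 : ℂ) + Complex.I * (2 * (y : ℂ) + (μ : ℂ)) + (n₀ : ℂ) + 2 * (k : ℂ))^2)
      with hg'def
  have hgd : ∀ (k : ℕ) (y : ℝ), HasDerivAt (g k) (g' k y) y := by
    intro k y
    have hy : HasDerivAt (fun s : ℝ => (s : ℂ)) 1 y := by
      simpa using (hasDerivAt_id ((y : ℝ) : ℂ)).comp_ofReal
    have hlin : HasDerivAt (fun s : ℝ => Complex.I * (2 * (s:ℂ) + (μ:ℂ))) (2 * Complex.I) y := by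
      have := ((hy.const_mul (2:ℂ)).add_const (μ:ℂ)).const_mul Complex.I
      refine this.congr_deriv ?_; ring
    have hN : HasDerivAt
        (fun s : ℝ => (1:ℂ) - Complex.I * (2*(s:ℂ)+(μ:ℂ)) + (n₀:ℂ) + 2*(k:ℂ))
        (-(2 * Complex.I)) y := ((hlin.const_sub 1).add_const _).add_const _
    have hD : HasDerivAt
        (fun s : ℝ => (1:ℂ) + Complex.I * (2*(s:ℂ)+(μ:ℂ)) + (n₀:ℂ) + 2*(k:ℂ))
        (2 * Complex.I) y := ((hlin.const_add 1).add_const _).add_const _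
    have h := hN.div hD (hDne k y)
    refine h.congr_deriv ?_
    rw [hg'def]
    simp only [hadef]
    push_cast
    ring
  have hg'abs : ∀ (k : ℕ) (y : ℝ), ‖g' k y‖ ≤ 4 / a k := by
    intro k y
    rw [hg'def]
    simp only [norm_div, norm_pow, norm_mul, habsD k y]
    rw [Real.sq_sqrt (by positivity)]
    have h1 : ‖(-4 : ℂ)‖ = 4 := by simp
    have h2 : ‖((a k : ℝ) : ℂ)‖ = a k := by
      rw [Complex.norm_real, Real.norm_eq_abs]; exact abs_of_pos (ha0 k)
    rw [h1, h2, Complex.norm_I, mul_one]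
    rw [div_le_div_iff₀ (by nlinarith [ha0 k, sq_nonneg (2*y+μ)]) (ha0 k)]
    nlinarith [ha0 k, sq_nonneg (2*y+μ)]
  -- m as a product
  have hm' : m = fun y => c0 * ∏ k ∈ Finset.range M, g k y := funext hm
  have hmd : ∀ y : ℝ, HasDerivAt m
      (c0 * ∑ k ∈ Finset.range M, (∏ j ∈ (Finset.range M).erase k, g j y) • g' k y) y := by
    intro y
    rw [hm']
    exact HasDerivAt.const_mul c0 (HasDerivAt.fun_finsetProd (fun k _ => hgd k y))
  refine ⟨?_, ?_, ?_⟩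
  · intro y
    rw [hm y, norm_mul, habs_c0, one_mul, norm_prod]
    exact Finset.prod_eq_one (fun k _ => habsg k y)
  · intro hge y
    rw [(hmd y).deriv, norm_mul, habs_c0, one_mul]
    have hM1 : 1 ≤ M := by omega
    obtain ⟨M', rfl⟩ : ∃ M', M = M' + 1 := ⟨M - 1, by omega⟩
    set c : ℝ := (n₀ : ℝ) + 1 with hcdef
    have hc1 : 1 ≤ c := by simp only [hcdef]; linarith
    calc ‖(∑ k ∈ Finset.range (M'+1),
            (∏ j ∈ (Finset.range (M'+1)).erase k, g j y) • g' k y)‖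
        ≤ ∑ k ∈ Finset.range (M'+1),
            ‖((∏ j ∈ (Finset.range (M'+1)).erase k, g j y) • g' k y)‖ :=
          norm_sum_le _ _
      _ ≤ ∑ k ∈ Finset.range (M'+1), 4 / (c + 2 * k) := by
          apply Finset.sum_le_sum
          intro k _
          rw [smul_eq_mul, norm_mul, norm_prod]
          have hp : (∏ j ∈ (Finset.range (M'+1)).erase k, ‖g j y‖) = 1 :=
            Finset.prod_eq_one (fun j _ => habsg j y)
          rw [hp, one_mul]
          have : a k = c + 2 * k := by simp only [hadef, hcdef]; ring
          rw [← this]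
          exact hg'abs k y
      _ ≤ 2 * (2 / c + Real.log ((c + 2 * M') / c)) := aux_sum_bound c hc1 M'
      _ = 2 * (2 / ((n₀:ℝ) + 1) + Real.log ((((|n| : ℤ) : ℝ) - 1) / ((n₀:ℝ) + 1))) := by
          have hNval : ((|n| : ℤ) : ℝ) = (n₀ : ℝ) + 2 * ((M' : ℝ) + 1) := by
            have := hM
            push_cast [this]
            ring
          rw [hNval, hcdef]
          ring_nf
  · intro heq y
    have hM0 : M = 0 := by omega
    subst hM0
    have := (hmd y).deriv
    simpa using this
end

section
/- Let q > 1 and A ≥ 1 be real numbers and μ ∈ ℝ. Define m: ℝ → ℂ by m(y) = ((1 − q^{−1 + i(2y+μ)}) / (1 − q^{−1 − i(2y+μ)})) · A^{−i(2y+μ)}. Then |m(y)| = 1 for all y ∈ ℝ, and |m′(y)| ≤ 2·(log A + 2·log q/(1 − q^{−1})) for all y ∈ ℝ. -/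
open MeasureTheory Real Complex

/-- Properties of the unitary-axis value of the local intertwining operator at a
nonarchimedean place (unramified case):
`m(y) = ((1 - q^{-1+i(2y+μ)})/(1 - q^{-1-i(2y+μ)})) · A^{-i(2y+μ)}` with `q > 1`, `A ≥ 1`
has modulus one, and `|m′(y)| ≤ 2(log A + 2 log q/(1 - q⁻¹))`. -/
theorem nonarch_intertwining_scalar
    (q A : ℝ) (hq : 1 < q) (hA : 1 ≤ A) (μ : ℝ)
    (m : ℝ → ℂ)
    (hm : ∀ y : ℝ, m y =
      ((1 - (q : ℂ) ^ ((-1 : ℂ) + Complex.I * (2 * (y : ℂ) + (μ : ℂ)))) /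
       (1 - (q : ℂ) ^ ((-1 : ℂ) - Complex.I * (2 * (y : ℂ) + (μ : ℂ))))) *
      (A : ℂ) ^ (-(Complex.I * (2 * (y : ℂ) + (μ : ℂ))))) :
    (∀ y : ℝ, ‖m y‖ = 1)
    ∧ ∀ y : ℝ, ‖deriv m y‖
        ≤ 2 * (Real.log A + 2 * Real.log q / (1 - q⁻¹)) := by
  have hq0 : (0:ℝ) < q := lt_trans one_pos hq
  have hA0 : (0:ℝ) < A := lt_of_lt_of_le one_pos hA
  have hlq : 0 < Real.log q := Real.log_pos hq
  have hlA : 0 ≤ Real.log A := Real.log_nonneg hA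
  have hqi : q⁻¹ < 1 := by
    rw [inv_lt_one_iff₀]; right; exact hq
  have hqi0 : 0 < q⁻¹ := inv_pos.mpr hq0
  set t : ℝ → ℂ := fun y => 2 * (y:ℂ) + (μ:ℂ) with ht
  set Ea : ℝ → ℂ := fun y => Complex.exp ((Real.log q : ℂ) * (-1 + Complex.I * t y)) with hEa
  set Eb : ℝ → ℂ := fun y => Complex.exp ((Real.log q : ℂ) * (-1 - Complex.I * t y)) with hEb
  set N : ℝ → ℂ := fun y => 1 - Ea y with hN
  set D : ℝ → ℂ := fun y => 1 - Eb y with hD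
  set H : ℝ → ℂ := fun y => Complex.exp ((Real.log A : ℂ) * (-(Complex.I * t y))) with hH
  have hqpow : ∀ w : ℂ, (q:ℂ) ^ w = Complex.exp ((Real.log q : ℂ) * w) := fun w => by
    rw [Complex.cpow_def_of_ne_zero (Complex.ofReal_ne_zero.mpr hq0.ne'), Complex.ofReal_log hq0.le]
  have hApow : ∀ w : ℂ, (A:ℂ) ^ w = Complex.exp ((Real.log A : ℂ) * w) := fun w => by
    rw [Complex.cpow_def_of_ne_zero (Complex.ofReal_ne_zero.mpr hA0.ne'), Complex.ofReal_log hA0.le]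
  have hmN : m = fun y => N y / D y * H y := funext fun y => by
    rw [hm y, hqpow, hqpow, hApow]
  have htre : ∀ y : ℝ, (t y).re = 2 * y + μ := fun y => by simp [ht]
  have htim : ∀ y : ℝ, (t y).im = 0 := fun y => by simp [ht]
  have habsEa : ∀ y, ‖Ea y‖ = q⁻¹ := fun y => by
    rw [hEa]
    simp only [htre, htim, Complex.norm_exp, Complex.mul_re, Complex.add_re, Complex.add_im,
      Complex.mul_im, Complex.mul_re, Complex.I_re, Complex.I_im, Complex.ofReal_re,
      Complex.ofReal_im, Complex.neg_re, Complex.neg_im, Complex.one_re, Complex.one_im,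
      Complex.re_ofNat, Complex.im_ofNat]
    rw [show Real.log q * (-1 + (0 * (2 * y + μ) - 1 * 0)) - 0 * _ = -Real.log q by ring,
      Real.exp_neg, Real.exp_log hq0]
  have habsEb : ∀ y, ‖Eb y‖ = q⁻¹ := fun y => by
    rw [hEb]
    simp only [htre, htim, Complex.norm_exp, Complex.mul_re, Complex.sub_re, Complex.sub_im,
      Complex.add_re, Complex.add_im, Complex.mul_im, Complex.I_re, Complex.I_im,
      Complex.ofReal_re, Complex.ofReal_im, Complex.neg_re, Complex.neg_im, Complex.one_re,
      Complex.one_im, Complex.re_ofNat, Complex.im_ofNat]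
    rw [show Real.log q * (-1 - (0 * (2 * y + μ) - 1 * 0)) - 0 * _ = -Real.log q by ring,
      Real.exp_neg, Real.exp_log hq0]
  have habsH : ∀ y, ‖H y‖ = 1 := fun y => by
    rw [hH]
    simp only [htre, htim, Complex.norm_exp, Complex.mul_re, Complex.neg_re, Complex.neg_im,
      Complex.mul_im, Complex.add_re, Complex.add_im, Complex.I_re, Complex.I_im,
      Complex.ofReal_re, Complex.ofReal_im, Complex.re_ofNat, Complex.im_ofNat]
    rw [show Real.log A * -(0 * (2 * y + μ) - 1 * 0) - 0 * _ = 0 by ring, Real.exp_zero]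
  have hconjN : ∀ y, (starRingEnd ℂ) (N y) = D y := fun y => by
    rw [hN, hD, map_sub, map_one, hEa, hEb, ← Complex.exp_conj]
    congr 1
    rw [ht]
    simp only [map_mul, map_add, map_sub, map_neg, map_one, Complex.conj_I,
      Complex.conj_ofReal, map_ofNat]
    ring
  have habsND : ∀ y, ‖N y‖ = ‖D y‖ := fun y => by
    rw [← hconjN y, Complex.norm_conj]
  have hDlb : ∀ y, 1 - q⁻¹ ≤ ‖D y‖ := fun y => by
    have h1 : ‖(1:ℂ)‖ ≤ ‖D y‖ + ‖Eb y‖ := by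
      calc ‖(1:ℂ)‖ = ‖D y + Eb y‖ := by rw [hD]; ring_nf
        _ ≤ _ := norm_add_le _ _
    rw [norm_one, habsEb y] at h1
    linarith
  have hDpos : ∀ y, 0 < ‖D y‖ := fun y => lt_of_lt_of_le (by linarith) (hDlb y)
  have hDne : ∀ y, D y ≠ 0 := fun y h => by have := hDpos y; rw [h] at this; simp at this
  constructor
  · intro y
    rw [hmN]
    simp only [norm_mul, norm_div]
    rw [habsND y, habsH y, div_self (hDpos y).ne', mul_one]
  · intro y
    have hty : HasDerivAt t 2 y := by
      have h1 : HasDerivAt (fun y:ℝ => (y:ℂ)) 1 y := by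
        simpa using (hasDerivAt_id y).ofReal_comp
      rw [ht]; simpa using (h1.const_mul (2:ℂ)).add_const (μ:ℂ)
    have hEa' : HasDerivAt Ea (Ea y * ((Real.log q : ℂ) * (Complex.I * 2))) y := by
      have h := (((hty.const_mul Complex.I).const_add (-1)).const_mul (Real.log q : ℂ)).cexp
      rw [hEa]; simpa using h
    have hEb' : HasDerivAt Eb (Eb y * ((Real.log q : ℂ) * (-(Complex.I * 2)))) y := by
      have h := (((hty.const_mul Complex.I).const_sub (-1)).const_mul (Real.log q : ℂ)).cexp
      rw [hEb]
      convert h using 2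
    have hHd : HasDerivAt H (H y * ((Real.log A : ℂ) * (-(Complex.I * 2)))) y := by
      have h := (((hty.const_mul Complex.I).neg).const_mul (Real.log A : ℂ)).cexp
      rw [hH]
      convert h using 2 <;> rfl
    have hNd : HasDerivAt N (-(Ea y * ((Real.log q : ℂ) * (Complex.I * 2)))) y := by
      rw [hN]; exact hEa'.const_sub 1
    have hDd : HasDerivAt D (-(Eb y * ((Real.log q : ℂ) * (-(Complex.I * 2))))) y := by
      rw [hD]; exact hEb'.const_sub 1
    set N' : ℂ := -(Ea y * ((Real.log q : ℂ) * (Complex.I * 2))) with hN'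
    set D' : ℂ := -(Eb y * ((Real.log q : ℂ) * (-(Complex.I * 2)))) with hD'
    set H' : ℂ := H y * ((Real.log A : ℂ) * (-(Complex.I * 2))) with hH'
    have hMd : HasDerivAt m
        ((N' * D y - N y * D') / D y ^ 2 * H y + N y / D y * H') y := by
      rw [hmN]
      exact (hNd.div hDd (hDne y)).mul hHd
    rw [hMd.deriv]
    -- abs computations for derivatives
    have habsI2 : ‖Complex.I * 2‖ = 2 := by
      simp
    have habsN' : ‖N'‖ = 2 * Real.log q * q⁻¹ := by
      rw [hN']
      simp only [norm_neg, norm_mul, habsEa y, Complex.norm_real, Real.norm_eq_abs, habsI2,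
        abs_of_pos hlq]
      ring
    have habsD' : ‖D'‖ = 2 * Real.log q * q⁻¹ := by
      rw [hD']
      simp only [norm_neg, norm_mul, habsEb y, Complex.norm_real, Real.norm_eq_abs, habsI2,
        abs_of_pos hlq]
      ring
    have habsH' : ‖H'‖ = 2 * Real.log A := by
      rw [hH']
      simp only [norm_mul, norm_neg, habsH y, Complex.norm_real, Real.norm_eq_abs, habsI2,
        _root_.abs_of_nonneg hlA]
      ring
    have hdd := hDlb y
    have hdd0 := hDpos y
    have key1 : ‖(N' * D y - N y * D') / D y ^ 2 * H y‖
        ≤ 4 * Real.log q / (1 - q⁻¹) := by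
      rw [norm_mul, norm_div, habsH y, mul_one, norm_pow]
      have hnum : ‖N' * D y - N y * D'‖
          ≤ 4 * Real.log q * q⁻¹ * ‖D y‖ := by
        calc ‖N' * D y - N y * D'‖
            ≤ ‖N' * D y‖ + ‖N y * D'‖ := norm_sub_le _ _
          _ = 2 * Real.log q * q⁻¹ * ‖D y‖
              + ‖D y‖ * (2 * Real.log q * q⁻¹) := by
              rw [norm_mul, norm_mul, habsN', habsD', habsND y]
          _ = 4 * Real.log q * q⁻¹ * ‖D y‖ := by ring
      calc ‖N' * D y - N y * D'‖ / ‖D y‖ ^ 2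
          ≤ 4 * Real.log q * q⁻¹ * ‖D y‖ / ‖D y‖ ^ 2 := by
            apply div_le_div_of_nonneg_right hnum (by positivity) |>.trans_eq rfl
        _ = 4 * Real.log q * q⁻¹ / ‖D y‖ := by
            field_simp
        _ ≤ 4 * Real.log q * q⁻¹ / (1 - q⁻¹) := by
            apply div_le_div_of_nonneg_left (by positivity) (by linarith) hdd
        _ ≤ 4 * Real.log q / (1 - q⁻¹) := by
            apply div_le_div_of_nonneg_right _ (by linarith)
            nlinarith
    have key2 : ‖N y / D y * H'‖ = 2 * Real.log A := by
      rw [norm_mul, norm_div, habsND y, div_self hdd0.ne', one_mul, habsH']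
    calc ‖(N' * D y - N y * D') / D y ^ 2 * H y + N y / D y * H'‖
        ≤ ‖(N' * D y - N y * D') / D y ^ 2 * H y‖
          + ‖N y / D y * H'‖ := norm_add_le _ _
      _ ≤ 4 * Real.log q / (1 - q⁻¹) + 2 * Real.log A := by rw [key2]; linarith
      _ = 2 * (Real.log A + 2 * Real.log q / (1 - q⁻¹)) := by ring
end

section
/- For every w ∈ ℂ there exists a ∈ [1, 2) such that ∫_0^∞ e^{−a(t² + t^{−2})} t^{w} · dt/t ≠ 0. (The integral converges absolutely for every a > 0 and every w ∈ ℂ.) -/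
open MeasureTheory Real Complex Set Filter

noncomputable section

namespace BesselNZ

def u (t : ℝ) : ℝ := t ^ 2 + (t ^ 2)⁻¹

lemma u_nonneg {t : ℝ} : 0 ≤ u t := by
  unfold u; positivity

lemma exp_two_log {t : ℝ} (ht : 0 < t) : Real.exp (2 * Real.log t) = t ^ 2 := by
  rw [mul_comm, Real.exp_mul, Real.exp_log ht, Real.rpow_two]

lemma u_eq_cosh {t : ℝ} (ht : 0 < t) : u t = 2 * Real.cosh (2 * Real.log t) := by
  rw [Real.cosh_eq, u, Real.exp_neg, exp_two_log ht]
  ring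

lemma u_ge_sq {t : ℝ} : t ^ 2 ≤ u t := by
  have : (0:ℝ) ≤ (t^2)⁻¹ := by positivity
  unfold u; linarith

lemma u_ge_inv_sq {t : ℝ} : (t ^ 2)⁻¹ ≤ u t := by
  have := sq_nonneg t; unfold u; linarith

lemma continuousOn_u : ContinuousOn u (Ioi (0:ℝ)) := by
  apply ContinuousOn.add (continuousOn_id.pow 2)
  exact (continuousOn_id.pow 2).inv₀ fun t ht => pow_ne_zero _ (ne_of_gt ht)

/-- key elementary bound: `v^n * exp (-r*v) ≤ n!/r^n` for `v, r > 0`. -/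
lemma pow_mul_exp_neg_le {r v : ℝ} (hr : 0 < r) (hv : 0 ≤ v) (n : ℕ) :
    v ^ n * Real.exp (-r * v) ≤ n.factorial / r ^ n := by
  have h := Real.pow_div_factorial_le_exp (x := r * v) (by positivity) n
  rw [div_le_iff₀ (by positivity)] at h
  rw [← Real.exp_log (show (0:ℝ) < n.factorial / r ^ n by positivity)]
  have hrn : (0:ℝ) < r ^ n := by positivity
  calc v ^ n * Real.exp (-r * v) = ((r*v)^n / r^n) * Real.exp (-r*v) := by
        rw [mul_pow, mul_comm (r^n), mul_div_assoc, div_self (ne_of_gt hrn), mul_one]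
    _ ≤ (Real.exp (r*v) * n.factorial / r^n) * Real.exp (-r*v) := by
        apply mul_le_mul_of_nonneg_right _ (Real.exp_nonneg _)
        gcongr <;> linarith
    _ = n.factorial / r^n * (Real.exp (r*v) * Real.exp (-r*v)) := by ring
    _ = n.factorial / r^n := by rw [← Real.exp_add]; simp
    _ = _ := by rw [Real.exp_log (by positivity)]

end BesselNZ

namespace BesselNZ

/-- bounding the "inner" factor near zero -/
lemma inner_bound (r c : ℝ) (hr : 0 < r) :
    ∃ C : ℝ, 0 < C ∧ ∀ t : ℝ, 0 < t →
      Real.exp (-r * u t) * t ^ c ≤ C * (t ^ max c 0 * Real.exp (-r * t ^ 2)) := by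
  set d : ℝ := max c 0 - c with hd
  have hd0 : 0 ≤ d := by simp [hd]
  set n : ℕ := ⌈d / 2⌉₊ with hn
  set C : ℝ := max 1 (n.factorial / r ^ n) with hC
  have hC1 : (1:ℝ) ≤ C := le_max_left _ _
  refine ⟨C, lt_of_lt_of_le one_pos hC1, fun t ht => ?_⟩
  have hexp : Real.exp (-r * u t) = Real.exp (-r * t ^ 2) * Real.exp (-r * (t^2)⁻¹) := by
    rw [← Real.exp_add, u]; ring_nf
  have key : Real.exp (-r * (t^2)⁻¹) * t ^ (c - max c 0) ≤ C := by
    have h2 : ((t^2)⁻¹ : ℝ) = t ^ (-(2:ℝ)) := by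
      rw [Real.rpow_neg ht.le]; congr 1
      rw [← Real.rpow_natCast t 2]; norm_num
    have htc : t ^ (c - max c 0) = ((t^2)⁻¹) ^ (d / 2) := by
      rw [h2, ← Real.rpow_mul ht.le]
      congr 1; rw [hd]; ring
    set v : ℝ := (t^2)⁻¹ with hv
    have hv0 : 0 < v := by positivity
    rw [htc]
    rcases le_total v 1 with h1 | h1
    · have : v ^ (d/2) ≤ 1 := Real.rpow_le_one hv0.le h1 (by positivity)
      have h2 : Real.exp (-r * v) ≤ 1 := by
        rw [Real.exp_le_one_iff]; nlinarith
      calc Real.exp (-r*v) * v ^ (d/2) ≤ 1 * 1 :=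
            mul_le_mul h2 this (by positivity) one_pos.le
        _ ≤ C := by simpa using hC1
    · have hvn : v ^ (d/2) ≤ v ^ (n:ℝ) :=
        Real.rpow_le_rpow_of_exponent_le h1 (Nat.le_ceil _)
      have : Real.exp (-r*v) * v ^ (d/2) ≤ v ^ n * Real.exp (-r * v) := by
        rw [mul_comm]; gcongr
        rw [← Real.rpow_natCast v n]; exact hvn
      exact this.trans ((pow_mul_exp_neg_le hr hv0.le n).trans (le_max_right _ _))
  calc Real.exp (-r * u t) * t ^ c
      = (Real.exp (-r * (t^2)⁻¹) * t ^ (c - max c 0)) * (t ^ max c 0 * Real.exp (-r * t^2)) := by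
        have hsplit : t ^ c = t ^ (c - max c 0) * t ^ max c 0 := by
          rw [← Real.rpow_add ht]; ring_nf
        rw [hexp, hsplit]; ring
    _ ≤ C * (t ^ max c 0 * Real.exp (-r * t^2)) := by
        apply mul_le_mul_of_nonneg_right key (by positivity)

/-- master integrability lemma -/
lemma integrableOn_exp_u_rpow (r c : ℝ) (hr : 0 < r) :
    IntegrableOn (fun t : ℝ => Real.exp (-r * u t) * t ^ c) (Ioi 0) := by
  obtain ⟨C, hC, hbd⟩ := inner_bound r c hr
  have hmaj : IntegrableOn (fun t : ℝ => C * (t ^ max c 0 * Real.exp (-r * t ^ 2))) (Ioi 0) :=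
    (integrableOn_rpow_mul_exp_neg_mul_sq hr
      (lt_of_lt_of_le neg_one_lt_zero (le_max_right c 0))).const_mul C
  apply hmaj.mono'
  · apply ContinuousOn.aestronglyMeasurable _ measurableSet_Ioi
    apply ContinuousOn.mul
    · exact (Real.continuous_exp.comp_continuousOn (continuousOn_u.const_smul (-r)))
    · intro t ht
      exact (Real.continuousAt_rpow_const t c (Or.inl (ne_of_gt ht))).continuousWithinAt
  · rw [ae_restrict_iff' measurableSet_Ioi]
    apply ae_of_all
    intro t ht
    have ht' : (0:ℝ) < t := ht
    rw [Real.norm_eq_abs, _root_.abs_of_nonneg (by positivity)]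
    exact hbd t ht

end BesselNZ

namespace BesselNZ

def f (w z : ℂ) (t : ℝ) : ℂ := Complex.exp (-z * (u t : ℂ)) * (t:ℂ) ^ w / (t:ℂ)

def f' (w z : ℂ) (t : ℝ) : ℂ :=
  Complex.exp (-z * (u t : ℂ)) * (-(u t : ℂ)) * ((t:ℂ) ^ w / (t:ℂ))

lemma re_neg_mul (z : ℂ) (x : ℝ) : (-z * (x:ℂ)).re = -z.re * x := by simp

lemma norm_f {w z : ℂ} {t : ℝ} (ht : 0 < t) :
    ‖f w z t‖ = Real.exp (-z.re * u t) * t ^ (w.re - 1) := by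
  unfold f
  rw [norm_div, norm_mul, Complex.norm_exp, Complex.norm_cpow_eq_rpow_re_of_pos ht,
    Complex.norm_real, Real.norm_eq_abs,
    _root_.abs_of_pos ht, re_neg_mul, Real.rpow_sub ht, Real.rpow_one, mul_div_assoc]

lemma norm_f' {w z : ℂ} {t : ℝ} (ht : 0 < t) :
    ‖f' w z t‖ = u t * (Real.exp (-z.re * u t) * t ^ (w.re - 1)) := by
  unfold f'
  rw [norm_mul, norm_mul, norm_neg, norm_div, Complex.norm_exp,
    Complex.norm_cpow_eq_rpow_re_of_pos ht, Complex.norm_real, Complex.norm_real,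
    Real.norm_eq_abs, Real.norm_eq_abs,
    _root_.abs_of_pos ht, _root_.abs_of_nonneg (u_nonneg (t := t)),
    re_neg_mul, Real.rpow_sub ht, Real.rpow_one]
  ring

lemma continuousOn_exp_part (z : ℂ) :
    ContinuousOn (fun t : ℝ => Complex.exp (-z * (u t : ℂ))) (Ioi 0) := by
  apply Complex.continuous_exp.comp_continuousOn
  exact continuousOn_const.mul (Complex.continuous_ofReal.comp_continuousOn continuousOn_u)

lemma continuousOn_cpow_div (w : ℂ) :
    ContinuousOn (fun t : ℝ => (t:ℂ) ^ w / (t:ℂ)) (Ioi 0) := by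
  apply ContinuousOn.div
  · intro t ht
    exact (Complex.continuousAt_ofReal_cpow_const t w
      (Or.inr (ne_of_gt (ht : (0:ℝ) < t)))).continuousWithinAt
  · exact Complex.continuous_ofReal.continuousOn
  · intro t ht
    simpa using (ne_of_gt (ht : (0:ℝ) < t))

lemma continuousOn_f (w z : ℂ) : ContinuousOn (f w z) (Ioi 0) := by
  have : ContinuousOn (fun t : ℝ => Complex.exp (-z * (u t : ℂ)) * ((t:ℂ) ^ w / (t:ℂ)))
      (Ioi 0) := (continuousOn_exp_part z).mul (continuousOn_cpow_div w)
  unfold f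
  simpa only [mul_div_assoc] using this

lemma continuousOn_f' (w z : ℂ) : ContinuousOn (f' w z) (Ioi 0) := by
  unfold f'
  exact ((continuousOn_exp_part z).mul
    ((Complex.continuous_ofReal.comp_continuousOn continuousOn_u).neg)).mul
    (continuousOn_cpow_div w)

lemma integrableOn_f (w : ℂ) {z : ℂ} (hz : 0 < z.re) : IntegrableOn (f w z) (Ioi 0) := by
  apply (integrableOn_exp_u_rpow z.re (w.re - 1) hz).mono'
  · exact (continuousOn_f w z).aestronglyMeasurable measurableSet_Ioi
  · rw [ae_restrict_iff' measurableSet_Ioi]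
    exact ae_of_all _ fun t ht => le_of_eq (norm_f ht)

lemma hasDerivAt_f (w : ℂ) (t : ℝ) (z : ℂ) :
    HasDerivAt (fun z => f w z t) (f' w z t) z := by
  have h := ((((hasDerivAt_id z).neg.mul_const ((u t : ℝ) : ℂ)).cexp).mul_const
    ((t:ℂ) ^ w / (t:ℂ)))
  have : (fun z : ℂ => Complex.exp (-z * (u t : ℂ)) * ((t:ℂ) ^ w / (t:ℂ))) = fun z => f w z t := by
    funext z; simp [f, mul_div_assoc]
  rw [show (fun z : ℂ => Complex.exp ((-(id : ℂ → ℂ)) z * (u t : ℂ)) * ((t:ℂ) ^ w / (t:ℂ))) =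
    (fun z => f w z t) from this] at h
  refine h.congr_deriv ?_
  unfold f'
  simp [id]

def G (w z : ℂ) : ℂ := ∫ t in Ioi (0:ℝ), f w z t

lemma hasDerivAt_G (w : ℂ) {z₀ : ℂ} (hz : 0 < z₀.re) :
    HasDerivAt (G w) (∫ t in Ioi (0:ℝ), f' w z₀ t) z₀ := by
  set r := z₀.re / 2 with hrdef
  have hr : 0 < r := by positivity
  have key := hasDerivAt_integral_of_dominated_loc_of_deriv_le
    (μ := volume.restrict (Ioi (0:ℝ)))
    (F := fun z t => f w z t) (F' := fun z t => f' w z t) (x₀ := z₀)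
    (bound := fun t => (2 / r) * (Real.exp (-(r/2) * u t) * t ^ (w.re - 1)))
    (Metric.ball_mem_nhds z₀ hr)
    (Eventually.of_forall fun z => (continuousOn_f w z).aestronglyMeasurable measurableSet_Ioi)
    (integrableOn_f w hz)
    ((continuousOn_f' w z₀).aestronglyMeasurable measurableSet_Ioi)
    ?bound ?bint ?diff
  · exact key.2
  case bound =>
    rw [ae_restrict_iff' measurableSet_Ioi]
    apply ae_of_all
    intro t ht z hzball
    have ht' : (0:ℝ) < t := ht
    have hzre : r ≤ z.re := by
      have h1 : |(z - z₀).re| ≤ ‖z - z₀‖ := Complex.abs_re_le_norm _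
      have h2 : ‖z - z₀‖ < r := by
        rw [← dist_eq_norm]; exact Metric.mem_ball.mp hzball
      have := (abs_le.mp h1).1
      simp only [Complex.sub_re] at this
      have : z₀.re - r ≤ z.re := by linarith [h2, this]
      simpa [hrdef] using by linarith [this]
    rw [norm_f' ht']
    have hu := u_nonneg (t := t)
    have h3 : Real.exp (-z.re * u t) ≤ Real.exp (-r * u t) := by
      apply Real.exp_le_exp.mpr; nlinarith
    have h4 : Real.exp (-r * u t) = Real.exp (-(r/2) * u t) * Real.exp (-(r/2) * u t) := by
      rw [← Real.exp_add]; ring_nf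
    have h5 : u t * Real.exp (-(r/2) * u t) ≤ 2 / r := by
      have := pow_mul_exp_neg_le (r := r/2) (v := u t) (by positivity) hu 1
      simpa [Nat.factorial] using this.trans (by rw [pow_one]; norm_num [le_refl])
    have htc : (0:ℝ) ≤ t ^ (w.re - 1) := by positivity
    calc u t * (Real.exp (-z.re * u t) * t ^ (w.re - 1))
        ≤ u t * (Real.exp (-r * u t) * t ^ (w.re - 1)) := by
          apply mul_le_mul_of_nonneg_left _ hu
          exact mul_le_mul_of_nonneg_right h3 htc
      _ = (u t * Real.exp (-(r/2) * u t)) * (Real.exp (-(r/2) * u t) * t ^ (w.re - 1)) := by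
          rw [h4]; ring
      _ ≤ (2 / r) * (Real.exp (-(r/2) * u t) * t ^ (w.re - 1)) := by
          apply mul_le_mul_of_nonneg_right h5 (by positivity)
  case bint =>
    exact (integrableOn_exp_u_rpow (r/2) (w.re - 1) (by positivity)).const_mul _
  case diff =>
    exact ae_of_all _ fun t z _ => hasDerivAt_f w t z

end BesselNZ

namespace BesselNZ

lemma G_eq_zero_on_halfplane (w : ℂ) (h0 : ∀ a : ℝ, a ∈ Set.Ico (1:ℝ) 2 → G w a = 0) :
    ∀ z : ℂ, 0 < z.re → G w z = 0 := by
  have hopen : IsOpen {z : ℂ | 0 < z.re} := isOpen_lt continuous_const Complex.continuous_re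
  have hdiff : DifferentiableOn ℂ (G w) {z : ℂ | 0 < z.re} := fun z hz =>
    (hasDerivAt_G w hz).differentiableAt.differentiableWithinAt
  have han : AnalyticOnNhd ℂ (G w) {z : ℂ | 0 < z.re} := hdiff.analyticOnNhd hopen
  have hconn : IsPreconnected {z : ℂ | 0 < z.re} := (convex_halfSpace_re_gt 0).isPreconnected
  have h1 : (1:ℂ) ∈ {z : ℂ | 0 < z.re} := by simp
  have hfreq : ∃ᶠ z in nhdsWithin (1:ℂ) {(1:ℂ)}ᶜ, G w z = 0 := by
    have hseq : Tendsto (fun n : ℕ => (((1 + ((n:ℝ)+2)⁻¹ : ℝ)) : ℂ)) atTop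
        (nhdsWithin (1:ℂ) {(1:ℂ)}ᶜ) := by
      apply tendsto_nhdsWithin_of_tendsto_nhds_of_eventually_within
      · have h2 : Tendsto (fun n : ℕ => ((n:ℝ)+2)⁻¹) atTop (nhds 0) :=
          tendsto_inv_atTop_zero.comp
            (tendsto_atTop_add_const_right _ 2 tendsto_natCast_atTop_atTop)
        have h3 : Tendsto (fun n : ℕ => (1 + ((n:ℝ)+2)⁻¹ : ℝ)) atTop (nhds 1) := by
          simpa using tendsto_const_nhds.add h2
        have h4 : ((1:ℝ):ℂ) = (1:ℂ) := by norm_num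
        rw [← h4]
        exact (Complex.continuous_ofReal.tendsto 1).comp h3
      · apply Eventually.of_forall
        intro n
        simp only [Set.mem_compl_iff, Set.mem_singleton_iff]
        intro hcon
        rw [show (1:ℂ) = ((1:ℝ):ℂ) by norm_num] at hcon
        have h4 := Complex.ofReal_injective hcon
        have h5 : (0:ℝ) < ((n:ℝ)+2)⁻¹ := by positivity
        linarith [h4]
    apply hseq.frequently
    apply Frequently.of_forall
    intro n
    apply h0
    constructor
    · have : (0:ℝ) ≤ ((n:ℝ)+2)⁻¹ := by positivity
      linarith
    · have h6 : ((n:ℝ)+2)⁻¹ ≤ 2⁻¹ := by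
        apply inv_anti₀ (by norm_num)
        have : (0:ℝ) ≤ (n:ℝ) := Nat.cast_nonneg n
        linarith
      have : (2:ℝ)⁻¹ < 1 := by norm_num
      linarith
  intro z hz
  have := han.eqOn_zero_of_preconnected_of_frequently_eq_zero hconn h1 hfreq hz
  simpa using this

lemma re_f {w : ℂ} {a : ℝ} {t : ℝ} (ht : 0 < t) :
    (f w (a:ℂ) t).re
      = Real.exp (-a * u t) * t ^ (w.re - 1) * Real.cos (w.im * Real.log t) := by
  unfold f
  have hne : ((t:ℝ):ℂ) ≠ 0 := by simpa using ne_of_gt ht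
  have h1 : ((t:ℝ):ℂ) ^ w / ((t:ℝ):ℂ) = ((t:ℝ):ℂ) ^ (w - 1) := by
    rw [Complex.cpow_sub _ _ hne, Complex.cpow_one]
  rw [mul_div_assoc, h1]
  have h2 : ((t:ℝ):ℂ) ^ (w - 1) = Complex.exp ((w-1) * ((Real.log t : ℝ):ℂ)) := by
    rw [Complex.cpow_def_of_ne_zero hne, ← Complex.ofReal_log ht.le, mul_comm]
  rw [h2, ← Complex.exp_add, Complex.exp_re]
  have hre : (-(a:ℂ) * ((u t : ℝ):ℂ) + (w - 1) * ((Real.log t : ℝ):ℂ)).re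
      = -a * u t + (w.re - 1) * Real.log t := by simp
  have him : (-(a:ℂ) * ((u t : ℝ):ℂ) + (w - 1) * ((Real.log t : ℝ):ℂ)).im
      = w.im * Real.log t := by simp
  rw [hre, him, Real.exp_add, Real.rpow_def_of_pos ht]
  ring_nf

lemma re_G (w : ℂ) {a : ℝ} (ha : 0 < a) :
    (G w (a:ℂ)).re = ∫ t in Ioi (0:ℝ),
      Real.exp (-a * u t) * t ^ (w.re - 1) * Real.cos (w.im * Real.log t) := by
  rw [G, ← RCLike.re_to_complex, ← integral_re (integrableOn_f w (by simpa using ha))]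
  apply setIntegral_congr_fun measurableSet_Ioi
  intro t ht
  simp only [RCLike.re_to_complex]
  exact re_f (w := w) (a := a) (ht : (0:ℝ) < t)

lemma integrableOn_Phi (w : ℂ) {a : ℝ} (ha : 0 < a) :
    IntegrableOn (fun t : ℝ =>
      Real.exp (-a * u t) * t ^ (w.re - 1) * Real.cos (w.im * Real.log t)) (Ioi 0) := by
  apply (integrableOn_exp_u_rpow a (w.re - 1) ha).mono'
  · apply ContinuousOn.aestronglyMeasurable _ measurableSet_Ioi
    apply ContinuousOn.mul
    · apply ContinuousOn.mul
      · exact Real.continuous_exp.comp_continuousOn (continuousOn_u.const_smul (-a))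
      · intro t ht
        exact (Real.continuousAt_rpow_const t _ (Or.inl (ne_of_gt ht))).continuousWithinAt
    · apply Real.continuous_cos.comp_continuousOn
      apply ContinuousOn.const_smul _ w.im
      exact Real.continuousOn_log.mono (fun t ht => ne_of_gt (ht : (0:ℝ) < t))
  · rw [ae_restrict_iff' measurableSet_Ioi]
    apply ae_of_all
    intro t ht
    have ht' : (0:ℝ) < t := ht
    rw [Real.norm_eq_abs, abs_mul, abs_mul,
      _root_.abs_of_nonneg (Real.exp_nonneg _), _root_.abs_of_nonneg (by positivity)]
    calc Real.exp (-a * u t) * t ^ (w.re - 1) * |Real.cos (w.im * Real.log t)|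
        ≤ Real.exp (-a * u t) * t ^ (w.re - 1) * 1 := by
          apply mul_le_mul_of_nonneg_left (Real.abs_cos_le_one _) (by positivity)
      _ = Real.exp (-a * u t) * t ^ (w.re - 1) := by ring

end BesselNZ

namespace BesselNZ

set_option maxHeartbeats 1600000 in
lemma exists_integral_pos (w : ℂ) :
    ∃ a : ℝ, 1 ≤ a ∧ 0 < ∫ t in Ioi (0:ℝ),
      Real.exp (-a * u t) * t ^ (w.re - 1) * Real.cos (w.im * Real.log t) := by
  set x := w.re with hx
  set y := w.im with hy
  set δ : ℝ := (|y| + 1)⁻¹ with hδdef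
  have hδ : 0 < δ := by positivity
  have hyδ : |y| * δ < 1 := by
    have h1 : (0:ℝ) < |y| + 1 := by positivity
    have h2 : |y| * (|y|+1)⁻¹ < (|y|+1) * (|y|+1)⁻¹ :=
      mul_lt_mul_of_pos_right (lt_add_one |y|) (inv_pos.mpr h1)
    rwa [mul_inv_cancel₀ (ne_of_gt h1)] at h2
  set l : ℝ := Real.exp (-δ) with hldef
  set rr : ℝ := Real.exp δ with hrrdef
  set l' : ℝ := Real.exp (-(δ/2)) with hl'def
  set r' : ℝ := Real.exp (δ/2) with hr'def
  have hl0 : 0 < l := Real.exp_pos _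
  have hll' : l ≤ l' := Real.exp_le_exp.mpr (by linarith)
  have hl'r' : l' < r' := Real.exp_lt_exp.mpr (by linarith)
  have hr'rr : r' ≤ rr := Real.exp_le_exp.mpr (by linarith)
  have hl'0 : 0 < l' := Real.exp_pos _
  have hr'0 : 0 < r' := Real.exp_pos _
  have hlrr : l ≤ rr := le_trans hll' (hl'r'.le.trans hr'rr)
  set M' : ℝ := 2 * Real.cosh δ with hM'def
  set M : ℝ := 2 * Real.cosh (2*δ) with hMdef
  have hM'M : M' < M := by
    have h := Real.cosh_lt_cosh.mpr (show |δ| < |2*δ| by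
      rw [_root_.abs_of_pos hδ, _root_.abs_of_pos (show (0:ℝ) < 2*δ by linarith)]; linarith)
    simp only [hM'def, hMdef]; linarith
  have hM0 : 0 < M' := by
    have := Real.cosh_pos (x := δ); simp only [hM'def]; linarith
  -- log bounds on the big middle interval
  have hlog_main : ∀ t ∈ Set.Ioc l rr, |Real.log t| ≤ δ := by
    intro t ht
    have ht0 : 0 < t := lt_trans hl0 ht.1
    rw [abs_le]
    constructor
    · have h1 : Real.log l ≤ Real.log t := (Real.log_le_log_iff hl0 ht0).mpr ht.1.le
      simpa [hldef, Real.log_exp] using h1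
    · have h2 : Real.log t ≤ Real.log rr := (Real.log_le_log_iff ht0 (Real.exp_pos _)).mpr ht.2
      simpa [hrrdef, Real.log_exp] using h2
  have hcos : ∀ t ∈ Set.Ioc l rr, Real.cos 1 ≤ Real.cos (y * Real.log t) := by
    intro t ht
    have h1 : |y * Real.log t| ≤ |y| * δ := by
      rw [abs_mul]
      exact mul_le_mul_of_nonneg_left (hlog_main t ht) (abs_nonneg y)
    have h2 : |y * Real.log t| ≤ 1 := le_of_lt (lt_of_le_of_lt h1 hyδ)
    rw [← Real.cos_abs (y * Real.log t)]
    apply Real.cos_le_cos_of_nonneg_of_le_pi (abs_nonneg _) _ h2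
    linarith [Real.pi_gt_three]
  have hc0 : 0 < Real.cos 1 := by
    apply Real.cos_pos_of_mem_Ioo
    constructor
    · linarith [Real.pi_gt_three]
    · linarith [Real.pi_gt_three]
  set m : ℝ := min (l' ^ (x-1)) (r' ^ (x-1)) with hmdef
  have hm0 : 0 < m := lt_min (Real.rpow_pos_of_pos hl'0 _) (Real.rpow_pos_of_pos hr'0 _)
  have hm : ∀ t ∈ Set.Ioc l' r', m ≤ t ^ (x-1) := by
    intro t ht
    have ht0 : 0 < t := lt_trans hl'0 ht.1
    rcases le_total 0 (x-1) with hcase | hcase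
    · exact le_trans (min_le_left _ _) (Real.rpow_le_rpow hl'0.le ht.1.le hcase)
    · exact le_trans (min_le_right _ _) (Real.rpow_le_rpow_of_nonpos ht0 ht.2 hcase)
  have hu_main : ∀ t ∈ Set.Ioc l' r', u t ≤ M' := by
    intro t ht
    have ht0 : 0 < t := lt_trans hl'0 ht.1
    rw [u_eq_cosh ht0]
    have hlt : |Real.log t| ≤ δ/2 := by
      rw [abs_le]
      constructor
      · have h1 : Real.log l' ≤ Real.log t := (Real.log_le_log_iff hl'0 ht0).mpr ht.1.le
        simpa [hl'def, Real.log_exp] using h1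
      · have h2 : Real.log t ≤ Real.log r' := (Real.log_le_log_iff ht0 hr'0).mpr ht.2
        simpa [hr'def, Real.log_exp] using h2
    have habs : |2 * Real.log t| ≤ |δ| := by
      rw [abs_mul, _root_.abs_of_pos hδ]
      have : |(2:ℝ)| = 2 := by norm_num
      rw [this]
      linarith [abs_nonneg (Real.log t)]
    have := Real.cosh_le_cosh.mpr habs
    simp only [hM'def]; linarith
  have hu_tail : ∀ t : ℝ, 0 < t → t ∉ Set.Ioc l rr → M ≤ u t := by
    intro t ht0 htout
    rw [u_eq_cosh ht0]
    have hdlog : δ ≤ |Real.log t| := by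
      rcases lt_or_ge l t with h | h
      · have hrt : rr < t := by
          by_contra hc
          exact htout ⟨h, not_lt.mp hc⟩
        have h1 : Real.log rr ≤ Real.log t := (Real.log_le_log_iff (Real.exp_pos _) ht0).mpr hrt.le
        rw [hrrdef, Real.log_exp] at h1
        exact le_trans h1 (le_abs_self _)
      · have h2 : Real.log t ≤ Real.log l := (Real.log_le_log_iff ht0 hl0).mpr h
        rw [hldef, Real.log_exp] at h2
        have : δ ≤ -Real.log t := by linarith
        exact le_trans this (neg_le_abs _)
    have habs : |2*δ| ≤ |2 * Real.log t| := by
      rw [abs_mul, abs_mul]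
      have h2 : |(2:ℝ)| = 2 := by norm_num
      rw [h2, _root_.abs_of_pos hδ]
      linarith
    have := Real.cosh_le_cosh.mpr habs
    simp only [hMdef]; linarith
  set C : ℝ := ∫ t in Ioi (0:ℝ), Real.exp (-1 * u t) * t ^ (x-1) with hCdef
  have hCint : IntegrableOn (fun t : ℝ => Real.exp (-1 * u t) * t ^ (x-1)) (Ioi 0) :=
    integrableOn_exp_u_rpow 1 (x-1) one_pos
  have hC0 : 0 ≤ C := by
    apply setIntegral_nonneg measurableSet_Ioi
    intro t ht
    have ht' : (0:ℝ) < t := ht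
    positivity
  set κ : ℝ := Real.cos 1 * m * (r' - l') with hκdef
  have hκ0 : 0 < κ := by
    have h1 : 0 < r' - l' := by linarith
    simp only [hκdef]; positivity
  set R : ℝ := 2*(C+1)*Real.exp M / κ with hRdef
  have hR0 : 0 < R := by simp only [hRdef]; positivity
  set a : ℝ := max 1 (Real.log R / (M - M') + 1) with hadef
  have ha1 : 1 ≤ a := le_max_left _ _
  have ha0 : 0 < a := lt_of_lt_of_le one_pos ha1
  refine ⟨a, ha1, ?_⟩
  have hMM0 : 0 < M - M' := by linarith
  have hkey : 2*C*Real.exp (-(a-1)*M) < κ * Real.exp (-a*M') := by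
    have h1 : Real.log R / (M - M') + 1 ≤ a := le_max_right _ _
    have h3 : Real.log R / (M - M') ≤ a := by linarith
    have h2 : Real.log R ≤ a * (M - M') := by
      calc Real.log R = (Real.log R / (M - M')) * (M - M') := by field_simp
        _ ≤ a * (M - M') := mul_le_mul_of_nonneg_right h3 hMM0.le
    have h4 : R ≤ Real.exp (a * (M - M')) := (Real.log_le_iff_le_exp hR0).mp h2
    have h5 : 2*(C+1)*Real.exp M ≤ κ * Real.exp (a*(M-M')) := by
      calc 2*(C+1)*Real.exp M = (2*(C+1)*Real.exp M / κ) * κ := by field_simp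
        _ ≤ Real.exp (a*(M-M')) * κ := mul_le_mul_of_nonneg_right h4 hκ0.le
        _ = κ * Real.exp (a*(M-M')) := by ring
    have h6 : Real.exp (a*(M-M')) * Real.exp (-(a*M)) = Real.exp (-a*M') := by
      rw [← Real.exp_add]; ring_nf
    have h7 : Real.exp (-(a-1)*M) = Real.exp M * Real.exp (-(a*M)) := by
      rw [← Real.exp_add]; ring_nf
    have h8 : (0:ℝ) < Real.exp (-(a*M)) := Real.exp_pos _
    calc 2*C*Real.exp (-(a-1)*M) < 2*(C+1)*Real.exp (-(a-1)*M) := by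
          have := Real.exp_pos (-(a-1)*M); nlinarith
      _ = (2*(C+1)*Real.exp M) * Real.exp (-(a*M)) := by rw [h7]; ring
      _ ≤ (κ * Real.exp (a*(M-M'))) * Real.exp (-(a*M)) :=
          mul_le_mul_of_nonneg_right h5 h8.le
      _ = κ * Real.exp (-a*M') := by rw [mul_assoc, h6]
  set Φ : ℝ → ℝ := fun t => Real.exp (-a * u t) * t ^ (x-1) * Real.cos (y * Real.log t) with hΦ
  have hint : IntegrableOn Φ (Ioi 0) := integrableOn_Phi w ha0
  have hsub1 : Set.Ioc (0:ℝ) l ⊆ Ioi 0 := fun t ht => ht.1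
  have hsub2 : Set.Ioc l rr ⊆ Ioi 0 := fun t ht => lt_trans hl0 ht.1
  have hsub3 : Set.Ioi rr ⊆ Ioi (0:ℝ) := fun t ht =>
    lt_trans (lt_of_lt_of_le hl0 hlrr) ht
  have hsplit : ∫ t in Ioi (0:ℝ), Φ t
      = (∫ t in Set.Ioc (0:ℝ) l, Φ t) + ((∫ t in Set.Ioc l rr, Φ t) + ∫ t in Set.Ioi rr, Φ t) := by
    have e2 : ∫ t in Set.Ioi l, Φ t
        = (∫ t in Set.Ioc l rr, Φ t) + ∫ t in Set.Ioi rr, Φ t := by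
      rw [← Set.Ioc_union_Ioi_eq_Ioi hlrr]
      exact setIntegral_union (Set.Ioc_disjoint_Ioi le_rfl) measurableSet_Ioi
        (hint.mono_set hsub2) (hint.mono_set hsub3)
    have e1 : ∫ t in Ioi (0:ℝ), Φ t
        = (∫ t in Set.Ioc (0:ℝ) l, Φ t) + ∫ t in Set.Ioi l, Φ t := by
      rw [← Set.Ioc_union_Ioi_eq_Ioi hl0.le]
      exact setIntegral_union (Set.Ioc_disjoint_Ioi le_rfl) measurableSet_Ioi
        (hint.mono_set hsub1) (hint.mono_set (fun t ht => lt_trans hl0 ht))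
    rw [e1, e2]
  have htail_bound : ∀ s : Set ℝ, MeasurableSet s → s ⊆ Ioi 0 → (∀ t ∈ s, M ≤ u t) →
      |∫ t in s, Φ t| ≤ Real.exp (-(a-1)*M) * C := by
    intro s hms hsub hMs
    have hb : ∀ t ∈ s, |Φ t| ≤ Real.exp (-(a-1)*M) * (Real.exp (-1 * u t) * t ^ (x-1)) := by
      intro t ht
      have ht0 : 0 < t := hsub ht
      have h1 : |Φ t| ≤ Real.exp (-a * u t) * t ^ (x-1) := by
        simp only [hΦ]
        rw [abs_mul, abs_mul, _root_.abs_of_nonneg (Real.exp_nonneg _),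
          _root_.abs_of_nonneg (le_of_lt (Real.rpow_pos_of_pos ht0 _))]
        calc Real.exp (-a * u t) * t ^ (x-1) * |Real.cos (y * Real.log t)|
            ≤ Real.exp (-a * u t) * t ^ (x-1) * 1 :=
              mul_le_mul_of_nonneg_left (Real.abs_cos_le_one _) (by positivity)
          _ = Real.exp (-a * u t) * t ^ (x-1) := by ring
      have h2 : Real.exp (-a*u t) ≤ Real.exp (-(a-1)*M) * Real.exp (-1 * u t) := by
        rw [← Real.exp_add]
        apply Real.exp_le_exp.mpr
        have hMt := hMs t ht
        nlinarith
      calc |Φ t| ≤ Real.exp (-a*u t) * t^(x-1) := h1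
        _ ≤ (Real.exp (-(a-1)*M) * Real.exp (-1*u t)) * t^(x-1) :=
            mul_le_mul_of_nonneg_right h2 (le_of_lt (Real.rpow_pos_of_pos ht0 _))
        _ = Real.exp (-(a-1)*M) * (Real.exp (-1*u t) * t^(x-1)) := by ring
    calc |∫ t in s, Φ t| ≤ ∫ t in s, |Φ t| := by
          simpa [Real.norm_eq_abs] using
            norm_integral_le_integral_norm (μ := volume.restrict s) Φ
      _ ≤ ∫ t in s, Real.exp (-(a-1)*M) * (Real.exp (-1*u t) * t^(x-1)) := by
          exact setIntegral_mono_on ((hint.mono_set hsub).abs)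
            (((hCint.mono_set hsub)).const_mul _) hms hb
      _ ≤ ∫ t in Ioi (0:ℝ), Real.exp (-(a-1)*M) * (Real.exp (-1*u t) * t^(x-1)) := by
          apply setIntegral_mono_set (hCint.const_mul _)
          · filter_upwards [ae_restrict_mem measurableSet_Ioi] with t ht
            have ht' : (0:ℝ) < t := ht
            positivity
          · exact HasSubset.Subset.eventuallyLE hsub
      _ = Real.exp (-(a-1)*M) * C := by
          rw [hCdef, MeasureTheory.integral_const_mul]
  have hmain : κ * Real.exp (-a*M') ≤ ∫ t in Set.Ioc l rr, Φ t := by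
    have hnonneg : ∀ t ∈ Set.Ioc l rr, 0 ≤ Φ t := by
      intro t ht
      have ht0 : 0 < t := hsub2 ht
      have hcnn := le_trans hc0.le (hcos t ht)
      simp only [hΦ]
      apply mul_nonneg (by positivity) hcnn
    have hstep1 : ∫ t in Set.Ioc l' r', Φ t ≤ ∫ t in Set.Ioc l rr, Φ t := by
      apply setIntegral_mono_set (hint.mono_set hsub2)
      · filter_upwards [ae_restrict_mem measurableSet_Ioc] with t ht using hnonneg t ht
      · exact HasSubset.Subset.eventuallyLE (Set.Ioc_subset_Ioc hll' hr'rr)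
    have hconst : ∀ t ∈ Set.Ioc l' r',
        Real.exp (-a*M') * m * Real.cos 1 ≤ Φ t := by
      intro t ht
      have ht0 : 0 < t := lt_trans hl'0 ht.1
      have h1 : Real.exp (-a*M') ≤ Real.exp (-a * u t) :=
        Real.exp_le_exp.mpr (by nlinarith [hu_main t ht])
      have h2 := hm t ht
      have h3 : Real.cos 1 ≤ Real.cos (y * Real.log t) :=
        hcos t (Set.Ioc_subset_Ioc hll' hr'rr ht)
      simp only [hΦ]
      have h4 : Real.exp (-a*M') * m ≤ Real.exp (-a * u t) * t ^ (x-1) :=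
        mul_le_mul h1 h2 hm0.le (Real.exp_nonneg _)
      exact mul_le_mul h4 h3 hc0.le (by positivity)
    have hvol : (volume (Set.Ioc l' r')).toReal = r' - l' := by
      rw [Real.volume_Ioc, ENNReal.toReal_ofReal (by linarith)]
    have hstep2 := setIntegral_ge_of_const_le measurableSet_Ioc
      (by exact (measure_Ioc_lt_top).ne) hconst
      (hint.mono_set (subset_trans (Set.Ioc_subset_Ioc hll' hr'rr) hsub2))
    rw [measureReal_def, hvol, smul_eq_mul] at hstep2
    have : κ * Real.exp (-a*M') = Real.exp (-a*M') * m * Real.cos 1 * (r' - l') := by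
      simp only [hκdef]; ring
    rw [this]
    linarith [hstep2, hstep1]
  have ht1 : |∫ t in Set.Ioc (0:ℝ) l, Φ t| ≤ Real.exp (-(a-1)*M) * C := by
    apply htail_bound _ measurableSet_Ioc hsub1
    intro t ht
    exact hu_tail t ht.1 (fun hc => (not_lt.mpr ht.2) hc.1)
  have ht2 : |∫ t in Set.Ioi rr, Φ t| ≤ Real.exp (-(a-1)*M) * C := by
    apply htail_bound _ measurableSet_Ioi hsub3
    intro t ht
    exact hu_tail t (hsub3 ht) (fun hc => (not_lt.mpr hc.2) ht)
  rw [hsplit]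
  have hA := abs_le.mp ht1
  have hB := abs_le.mp ht2
  nlinarith [hmain, hkey, hA.1, hB.1]

end BesselNZ

open BesselNZ in
set_option maxHeartbeats 1000000 in
/-- For every `w ∈ ℂ` the integral `∫_0^∞ e^{-a(t² + t^{-2})} t^w dt/t` (which converges
absolutely for every `a > 0`) is nonzero for some `a ∈ [1, 2)`. -/
theorem exists_bessel_integral_ne_zero (w : ℂ) :
    (∀ a : ℝ, 0 < a →
      IntegrableOn
        (fun t : ℝ =>
          Complex.exp (-(a : ℂ) * ((t : ℂ) ^ 2 + (t : ℂ) ^ (-2 : ℤ))) * (t : ℂ) ^ w / (t : ℂ))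
        (Set.Ioi (0 : ℝ)) (volume : Measure ℝ))
    ∧ ∃ a : ℝ, a ∈ Set.Ico (1 : ℝ) 2 ∧
      (∫ t in Set.Ioi (0 : ℝ),
          Complex.exp (-(a : ℂ) * ((t : ℂ) ^ 2 + (t : ℂ) ^ (-2 : ℤ))) * (t : ℂ) ^ w / (t : ℂ))
        ≠ 0 := by
  have hcongr : ∀ a : ℝ, ∀ t ∈ Set.Ioi (0:ℝ),
      Complex.exp (-(a : ℂ) * ((t : ℂ) ^ 2 + (t : ℂ) ^ (-2 : ℤ))) * (t : ℂ) ^ w / (t : ℂ)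
        = BesselNZ.f w (a:ℂ) t := by
    intro a t ht
    have h2 : ((t:ℂ)) ^ (-2 : ℤ) = (((t:ℂ))^2)⁻¹ := by
      rw [zpow_neg, show ((2:ℤ)) = ((2:ℕ):ℤ) by norm_num, zpow_natCast]
    have h3 : ((BesselNZ.u t : ℝ) : ℂ) = (t:ℂ)^2 + (t:ℂ)^(-2:ℤ) := by
      rw [h2, BesselNZ.u]; push_cast; ring
    rw [BesselNZ.f, ← h3]
  constructor
  · intro a ha
    exact (BesselNZ.integrableOn_f w (z := (a:ℂ)) (by simpa using ha)).congr_fun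
      (fun t ht => (hcongr a t ht).symm) measurableSet_Ioi
  · by_contra hcon
    push_neg at hcon
    have h0 : ∀ a : ℝ, a ∈ Set.Ico (1:ℝ) 2 → BesselNZ.G w a = 0 := by
      intro a ha
      have hz := hcon a ha
      calc BesselNZ.G w a
          = ∫ t in Set.Ioi (0:ℝ),
            Complex.exp (-(a : ℂ) * ((t : ℂ) ^ 2 + (t : ℂ) ^ (-2 : ℤ))) * (t : ℂ) ^ w / (t : ℂ) :=
            (setIntegral_congr_fun measurableSet_Ioi (fun t ht => hcongr a t ht)).symm
        _ = 0 := hz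
    obtain ⟨a, ha1, hpos⟩ := BesselNZ.exists_integral_pos w
    have ha0 : (0:ℝ) < a := lt_of_lt_of_le one_pos ha1
    have hz : BesselNZ.G w (a:ℂ) = 0 :=
      BesselNZ.G_eq_zero_on_halfplane w h0 (a:ℂ) (by simpa using ha0)
    have hre := BesselNZ.re_G w ha0
    rw [hz] at hre
    simp only [Complex.zero_re] at hre
    linarith [hpos, hre.symm.le, hre.le]
end
end
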